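/- arXiv:1512.04563 — 11 statements merged into one kernel-verified Lean document; each statement's English description precedes it below -/
import Mathlib

section
/- Let c < d, set m = (c+d)/2, and let φ₁, φ₂, φ₃ be the standard quadratic Lagrange basis functions on [c,d] associated with the nodes c, m, d (so φᵢ is a quadratic polynomial with φᵢ(node_l) = δ_{il}). Let β be continuous on [c,d], let f be continuous on [c,d], and let p_h be continuously differentiable on [c,d] satisfying the discrete equation ∫_c^d β p_h' φ₂' dx = ∫_c^d f φ₂ dx. Define the recovered fluxes u_h(d) := -∫_c^d β p_h' φ₃' dx + ∫_c^d f φ₃ dx and u_h(c) := ∫_c^d β p_h' φ₁' dx - ∫_c^d f φ₁ dx. Then u_h(d) - u_h(c) = ∫_c^d f(x) dx. -/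
open Set intervalIntegral

lemma deriv_quad (a b K : ℝ) (hK : K ≠ 0) (x : ℝ) :
    deriv (fun x : ℝ => ((x - a) * (x - b)) / K) x = ((x - b) + (x - a)) / K := by
  have h : HasDerivAt (fun x : ℝ => ((x - a) * (x - b)) / K)
      ((1 * (x - b) + (x - a) * 1) / K) x := by
    exact (((hasDerivAt_id x).sub_const a).mul ((hasDerivAt_id x).sub_const b)).div_const K
  simpa using h.deriv

/-- Discrete conservation law for the recovered flux: with the quadratic Lagrange
basis `φ₁, φ₂, φ₃` on `[c,d]` (nodes `c`, `(c+d)/2`, `d`) and the discrete equation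
tested with `φ₂`, the recovered fluxes satisfy `u_h(d) - u_h(c) = ∫_c^d f`. -/
theorem stmt_3 (c d : ℝ) (hcd : c < d)
    (β f ph ph' : ℝ → ℝ)
    (hβ : ContinuousOn β (Icc c d)) (hf : ContinuousOn f (Icc c d))
    (hph : ∀ x ∈ Icc c d, HasDerivWithinAt ph (ph' x) (Icc c d) x)
    (hph'c : ContinuousOn ph' (Icc c d)) :
    let m := (c + d) / 2
    let φ₁ : ℝ → ℝ := fun x => ((x - m) * (x - d)) / ((c - m) * (c - d))
    let φ₂ : ℝ → ℝ := fun x => ((x - c) * (x - d)) / ((m - c) * (m - d))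
    let φ₃ : ℝ → ℝ := fun x => ((x - c) * (x - m)) / ((d - c) * (d - m))
    -- discrete equation tested with the midpoint basis function:
    (∫ x in c..d, β x * ph' x * deriv φ₂ x) = (∫ x in c..d, f x * φ₂ x) →
    -- conclusion: u_h(d) - u_h(c) = ∫_c^d f
    ((-∫ x in c..d, β x * ph' x * deriv φ₃ x) + ∫ x in c..d, f x * φ₃ x)
      - ((∫ x in c..d, β x * ph' x * deriv φ₁ x) - ∫ x in c..d, f x * φ₁ x)
      = ∫ x in c..d, f x := by
  intro m φ₁ φ₂ φ₃ hdisc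
  have hm : m = (c + d) / 2 := rfl
  have hcm : c - m ≠ 0 := by rw [hm]; intro h; nlinarith [sub_eq_zero.mp h]
  have hcd' : c - d ≠ 0 := sub_ne_zero.mpr hcd.ne
  have hmc : m - c ≠ 0 := by rw [hm]; intro h; nlinarith [sub_eq_zero.mp h]
  have hmd : m - d ≠ 0 := by rw [hm]; intro h; nlinarith [sub_eq_zero.mp h]
  have hdc : d - c ≠ 0 := sub_ne_zero.mpr hcd.ne'
  have hdm : d - m ≠ 0 := by rw [hm]; intro h; nlinarith [sub_eq_zero.mp h]
  have hK1 : (c - m) * (c - d) ≠ 0 := mul_ne_zero hcm hcd'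
  have hK2 : (m - c) * (m - d) ≠ 0 := mul_ne_zero hmc hmd
  have hK3 : (d - c) * (d - m) ≠ 0 := mul_ne_zero hdc hdm
  have hd1 : ∀ x, deriv φ₁ x = ((x - d) + (x - m)) / ((c - m) * (c - d)) :=
    fun x => deriv_quad m d _ hK1 x
  have hd2 : ∀ x, deriv φ₂ x = ((x - d) + (x - c)) / ((m - c) * (m - d)) :=
    fun x => deriv_quad c d _ hK2 x
  have hd3 : ∀ x, deriv φ₃ x = ((x - m) + (x - c)) / ((d - c) * (d - m)) :=
    fun x => deriv_quad c m _ hK3 x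
  -- pointwise identities
  have hsumd : ∀ x, deriv φ₁ x + deriv φ₂ x + deriv φ₃ x = 0 := by
    intro x
    rw [hd1, hd2, hd3, div_add_div _ _ hK1 hK2, div_add_div _ _ (mul_ne_zero hK1 hK2) hK3,
      div_eq_zero_iff]
    left
    rw [hm]; ring
  have hsum : ∀ x, φ₁ x + φ₂ x + φ₃ x = 1 := by
    intro x
    show ((x - m) * (x - d)) / ((c - m) * (c - d)) + ((x - c) * (x - d)) / ((m - c) * (m - d))
      + ((x - c) * (x - m)) / ((d - c) * (d - m)) = 1
    rw [div_add_div _ _ hK1 hK2, div_add_div _ _ (mul_ne_zero hK1 hK2) hK3,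
      div_eq_one_iff_eq (mul_ne_zero (mul_ne_zero hK1 hK2) hK3)]
    rw [hm]; ring
  have huIcc : uIcc c d = Icc c d := uIcc_of_le hcd.le
  have hβph' : ContinuousOn (fun x => β x * ph' x) (Icc c d) := hβ.mul hph'c
  -- integrability helpers
  have hdc1 : Continuous (deriv φ₁) := by
    have : (deriv φ₁) = fun x => ((x - d) + (x - m)) / ((c - m) * (c - d)) := funext hd1
    rw [this]
    exact ((continuous_id.sub continuous_const).add (continuous_id.sub continuous_const)).div_const _
  have hdc2 : Continuous (deriv φ₂) := by
    have : (deriv φ₂) = fun x => ((x - d) + (x - c)) / ((m - c) * (m - d)) := funext hd2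
    rw [this]
    exact ((continuous_id.sub continuous_const).add (continuous_id.sub continuous_const)).div_const _
  have hdc3 : Continuous (deriv φ₃) := by
    have : (deriv φ₃) = fun x => ((x - m) + (x - c)) / ((d - c) * (d - m)) := funext hd3
    rw [this]
    exact ((continuous_id.sub continuous_const).add (continuous_id.sub continuous_const)).div_const _
  have hI1 : IntervalIntegrable (fun x => β x * ph' x * deriv φ₁ x) MeasureTheory.volume c d :=
    (hβph'.mul (hdc1.continuousOn)).intervalIntegrable_of_Icc hcd.le
  have hI2 : IntervalIntegrable (fun x => β x * ph' x * deriv φ₂ x) MeasureTheory.volume c d :=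
    (hβph'.mul (hdc2.continuousOn)).intervalIntegrable_of_Icc hcd.le
  have hI3 : IntervalIntegrable (fun x => β x * ph' x * deriv φ₃ x) MeasureTheory.volume c d :=
    (hβph'.mul (hdc3.continuousOn)).intervalIntegrable_of_Icc hcd.le
  have hc1 : Continuous φ₁ :=
    ((continuous_id.sub continuous_const).mul (continuous_id.sub continuous_const)).div_const _
  have hc2 : Continuous φ₂ :=
    ((continuous_id.sub continuous_const).mul (continuous_id.sub continuous_const)).div_const _
  have hc3 : Continuous φ₃ :=
    ((continuous_id.sub continuous_const).mul (continuous_id.sub continuous_const)).div_const _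
  have hF1 : IntervalIntegrable (fun x => f x * φ₁ x) MeasureTheory.volume c d :=
    (hf.mul hc1.continuousOn).intervalIntegrable_of_Icc hcd.le
  have hF2 : IntervalIntegrable (fun x => f x * φ₂ x) MeasureTheory.volume c d :=
    (hf.mul hc2.continuousOn).intervalIntegrable_of_Icc hcd.le
  have hF3 : IntervalIntegrable (fun x => f x * φ₃ x) MeasureTheory.volume c d :=
    (hf.mul hc3.continuousOn).intervalIntegrable_of_Icc hcd.le
  have key1 : (∫ x in c..d, β x * ph' x * deriv φ₁ x) + (∫ x in c..d, β x * ph' x * deriv φ₂ x)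
      + (∫ x in c..d, β x * ph' x * deriv φ₃ x) = 0 := by
    rw [← integral_add hI1 hI2, ← integral_add (hI1.add hI2) hI3]
    have : (fun x => β x * ph' x * deriv φ₁ x + β x * ph' x * deriv φ₂ x
        + β x * ph' x * deriv φ₃ x) = fun _ => (0 : ℝ) := by
      funext x
      linear_combination (β x * ph' x) * hsumd x
    rw [show (∫ x in c..d, (β x * ph' x * deriv φ₁ x + β x * ph' x * deriv φ₂ x
        + β x * ph' x * deriv φ₃ x)) = ∫ x in c..d, (0:ℝ) from by rw [this]]
    simp
  have key2 : (∫ x in c..d, f x * φ₁ x) + (∫ x in c..d, f x * φ₂ x)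
      + (∫ x in c..d, f x * φ₃ x) = ∫ x in c..d, f x := by
    rw [← integral_add hF1 hF2, ← integral_add (hF1.add hF2) hF3]
    apply intervalIntegral.integral_congr
    intro x _
    simp only
    linear_combination (f x) * hsum x
  linarith [hdisc, key1, key2]
end

section
/- Let x1 < x2 < x3 with x2 = (x1+x3)/2, let α ∈ (x1,x3), let ρ > 0, and assume D := (α-x1)(x2-x1) + (α-x1)(x3-α) + ρ(α-x2)(α-x3) ≠ 0. Then the three quadratic IFE basis functions on the interface element satisfy the partition of unity φ1(x) + φ2(x) + φ3(x) = 1 for every x ∈ (x1,α) and for every x ∈ (α,x3). -/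
open Set

/-- Partition of unity for the quadratic IFE basis functions on the interface
element: `φ1 + φ2 + φ3 = 1` on `(x1,α)` and on `(α,x3)`. -/
theorem stmt_4 (x1 x2 x3 α ρ : ℝ) (h12 : x1 < x2) (h23 : x2 < x3)
    (hmid : x2 = (x1 + x3) / 2) (hα : α ∈ Ioo x1 x3) (hρ : 0 < ρ)
    (hD : (α - x1) * (x2 - x1) + (α - x1) * (x3 - α) + ρ * (α - x2) * (α - x3) ≠ 0) :
    let D := (α - x1) * (x2 - x1) + (α - x1) * (x3 - α) + ρ * (α - x2) * (α - x3)
    (∀ x ∈ Ioo x1 α,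
        (((x - (x2 + x3 - x1)) * (x - x1)) / D + 1)
          + ((x1 - α) * (x - α) * (x - x1)
              - ρ * (x3 - α) * (x - x1) * (x - (α + x3 - x1))) / (D * ρ * (x3 - x2))
          + ((α - x1) * (x - α) * (x - x1)
              - ρ * (α - x2) * (x - x1) * (x - (α + x2 - x1))) / (D * ρ * (x3 - x2)) = 1)
    ∧ (∀ x ∈ Ioo α x3,
        (ρ * (x - x2) * (x - x3)) / D
          + ((x1 - α) * (x - x3) * (x + (x3 - α - x1))
              - ρ * (x3 - α) * (x - α) * (x - x3)) / (D * (x3 - x2))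
          + ((α - x1) * (x - x2) * (x - (α + x1 - x2))
              - ρ * (α - x2) * (x - α) * (x - x2)) / (D * (x3 - x2)) = 1) := by
  intro D
  have hρ' : ρ ≠ 0 := ne_of_gt hρ
  have h32 : x3 - x2 ≠ 0 := sub_ne_zero.mpr (ne_of_gt h23)
  have hD' : D ≠ 0 := hD
  have hDdef : D = (α - x1) * (x2 - x1) + (α - x1) * (x3 - α) + ρ * (α - x2) * (α - x3) := rfl
  clear_value D
  constructor
  · intro x hx
    field_simp
    ring
  · intro x hx
    rw [div_add_div _ _ hD' (mul_ne_zero hD' h32),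
      div_add_div _ _ (mul_ne_zero hD' (mul_ne_zero hD' h32)) (mul_ne_zero hD' h32),
      div_eq_one_iff_eq (mul_ne_zero (mul_ne_zero hD' (mul_ne_zero hD' h32)) (mul_ne_zero hD' h32))]
    linear_combination (-(D ^ 2) * (x3 - x2) ^ 2) * hDdef
end

section
/- Let β⁻, β⁺ > 0 and set ρ = β⁻/β⁺. Let x1 < x2 < x3 with x2 = (x1+x3)/2, let α ∈ (x1,x2), and assume D := (α-x1)(x2-x1) + (α-x1)(x3-α) + ρ(α-x2)(α-x3) ≠ 0. Then the IFE basis function φ1 satisfies: (a) the nodal conditions φ1(x1) = 1, φ1(x2) = 0, φ1(x3) = 0; (b) the matching conditions at the interface: φ1(α⁻) = φ1(α⁺), β⁻ φ1'(α⁻) = β⁺ φ1'(α⁺), and β⁻ φ1''(α⁻) = β⁺ φ1''(α⁺), where one-sided values are taken from the two quadratic branches. -/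
private lemma hd_m (c d D : ℝ) (x : ℝ) :
    HasDerivAt (fun x : ℝ => ((x - c) * (x - d)) / D + 1) ((2 * x - c - d) / D) x := by
  have h : HasDerivAt (fun x : ℝ => (x - c) * (x - d)) ((x - c) + (x - d)) x := by
    have := (((hasDerivAt_id x).sub_const c).mul ((hasDerivAt_id x).sub_const d))
    refine this.congr_deriv ?_
    simp only [id_eq]; ring
  have := (h.div_const D).add_const 1
  refine this.congr_deriv ?_
  ring

private lemma hd_p (ρ x2 x3 D : ℝ) (x : ℝ) :
    HasDerivAt (fun x : ℝ => ρ * (x - x2) * (x - x3) / D) ((ρ * ((x - x2) + (x - x3))) / D) x := by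
  have h : HasDerivAt (fun x : ℝ => ρ * (x - x2) * (x - x3))
      (ρ * ((x - x2) + (x - x3))) x := by
    have := ((((hasDerivAt_id x).sub_const x2).const_mul ρ).mul ((hasDerivAt_id x).sub_const x3))
    refine this.congr_deriv ?_
    simp only [id_eq]; ring
  simpa using h.div_const D

/-- Nodal and interface matching conditions for the quadratic IFE basis function `φ1`
(with left branch `φm` on `(x1,α)` and right branch `φp` on `(α,x3)`). -/
theorem stmt_5 (βm βp x1 x2 x3 α : ℝ) (hβm : 0 < βm) (hβp : 0 < βp)
    (h12 : x1 < x2) (h23 : x2 < x3) (hmid : x2 = (x1 + x3) / 2)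
    (hα : α ∈ Set.Ioo x1 x2) :
    let ρ := βm / βp
    let D := (α - x1) * (x2 - x1) + (α - x1) * (x3 - α) + ρ * (α - x2) * (α - x3)
    D ≠ 0 →
    let φm : ℝ → ℝ := fun x => ((x - (x2 + x3 - x1)) * (x - x1)) / D + 1
    let φp : ℝ → ℝ := fun x => ρ * (x - x2) * (x - x3) / D
    -- (a) nodal conditions
    φm x1 = 1 ∧ φp x2 = 0 ∧ φp x3 = 0 ∧
    -- (b) matching conditions at the interface
    φm α = φp α ∧
    βm * deriv φm α = βp * deriv φp α ∧
    βm * deriv (deriv φm) α = βp * deriv (deriv φp) α := by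
  intro ρ D hD φm φp
  have hβp' : βp ≠ 0 := ne_of_gt hβp
  have hρ : βp * ρ = βm := by simp only [ρ]; field_simp
  have hdm : deriv φm = fun x => (2 * x - (x2 + x3 - x1) - x1) / D := by
    funext x; exact (hd_m (x2 + x3 - x1) x1 D x).deriv
  have hdp : deriv φp = fun x => (ρ * ((x - x2) + (x - x3))) / D := by
    funext x; exact (hd_p ρ x2 x3 D x).deriv
  have hddm : deriv (deriv φm) α = 2 / D := by
    rw [hdm]
    have h : HasDerivAt (fun x : ℝ => (2 * x - (x2 + x3 - x1) - x1) / D) (2 / D) α := by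
      have := ((((hasDerivAt_id α).const_mul 2).sub_const (x2 + x3 - x1)).sub_const x1).div_const D
      simpa [mul_comm] using this
    exact h.deriv
  have hddp : deriv (deriv φp) α = (ρ * 2) / D := by
    rw [hdp]
    have h : HasDerivAt (fun x : ℝ => (ρ * ((x - x2) + (x - x3))) / D) ((ρ * 2) / D) α := by
      have h0 : HasDerivAt (fun x : ℝ => (x - x2) + (x - x3)) 2 α := by
        have := ((hasDerivAt_id α).sub_const x2).add ((hasDerivAt_id α).sub_const x3)
        exact this.congr_deriv one_add_one_eq_two
      exact (h0.const_mul ρ).div_const D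
    exact h.deriv
  refine ⟨by simp [φm], by simp [φp], by simp [φp], ?_, ?_, ?_⟩
  · show ((α - (x2 + x3 - x1)) * (α - x1)) / D + 1 = ρ * (α - x2) * (α - x3) / D
    rw [div_add' _ _ _ hD, div_eq_div_iff hD hD]
    have hDdef : D = (α - x1) * (x2 - x1) + (α - x1) * (x3 - α) + ρ * (α - x2) * (α - x3) := rfl
    rw [hDdef]; ring
  · rw [hdm, hdp]
    simp only
    rw [← mul_div_assoc, ← mul_div_assoc, ← mul_assoc, hρ]
    congr 1
    ring
  · rw [hddm, hddp, ← mul_div_assoc, ← mul_div_assoc, ← mul_assoc, hρ]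
end

section
/- Let β⁻, β⁺ > 0 and set ρ = β⁻/β⁺. Let x1 < x2 < x3 with x2 = (x1+x3)/2, let α ∈ (x1,x2), and assume D := (α-x1)(x2-x1) + (α-x1)(x3-α) + ρ(α-x2)(α-x3) ≠ 0. Then the IFE basis function φ2 satisfies: (a) the nodal conditions φ2(x1) = 0, φ2(x2) = 1, φ2(x3) = 0; (b) the matching conditions at the interface: φ2(α⁻) = φ2(α⁺), β⁻ φ2'(α⁻) = β⁺ φ2'(α⁺), and β⁻ φ2''(α⁻) = β⁺ φ2''(α⁺), where one-sided values are taken from the two quadratic branches. -/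
private lemma quad_deriv (a b c : ℝ) :
    deriv (fun x : ℝ => a * x ^ 2 + b * x + c) = fun x => 2 * a * x + b := by
  funext x
  have h : HasDerivAt (fun x : ℝ => a * x ^ 2 + b * x + c) (2 * a * x + b) x := by
    have h1 : HasDerivAt (fun x : ℝ => x ^ 2) (2 * x) x := by
      simpa using (hasDerivAt_pow 2 x)
    have := ((h1.const_mul a).add ((hasDerivAt_id x).const_mul b)).add_const c
    exact this.congr_deriv (by ring)
  exact h.deriv

private lemma lin_deriv (a b : ℝ) :
    deriv (fun x : ℝ => 2 * a * x + b) = fun _ => 2 * a := by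
  funext x
  have h : HasDerivAt (fun x : ℝ => 2 * a * x + b) (2 * a) x := by
    simpa using ((hasDerivAt_id x).const_mul (2 * a)).add_const b
  exact h.deriv

/-- Nodal and interface matching conditions for the quadratic IFE basis function `φ2`
(with left branch `φm` on `(x1,α)` and right branch `φp` on `(α,x3)`). -/
theorem stmt_6 (βm βp x1 x2 x3 α : ℝ) (hβm : 0 < βm) (hβp : 0 < βp)
    (h12 : x1 < x2) (h23 : x2 < x3) (hmid : x2 = (x1 + x3) / 2)
    (hα : α ∈ Set.Ioo x1 x2) :
    let ρ := βm / βp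
    let D := (α - x1) * (x2 - x1) + (α - x1) * (x3 - α) + ρ * (α - x2) * (α - x3)
    D ≠ 0 →
    let φm : ℝ → ℝ := fun x =>
      ((x1 - α) * (x - α) * (x - x1)
        - ρ * (x3 - α) * (x - x1) * (x - (α + x3 - x1))) / (D * ρ * (x3 - x2))
    let φp : ℝ → ℝ := fun x =>
      ((x1 - α) * (x - x3) * (x + (x3 - α - x1))
        - ρ * (x3 - α) * (x - α) * (x - x3)) / (D * (x3 - x2))
    -- (a) nodal conditions
    φm x1 = 0 ∧ φp x2 = 1 ∧ φp x3 = 0 ∧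
    -- (b) matching conditions at the interface
    φm α = φp α ∧
    βm * deriv φm α = βp * deriv φp α ∧
    βm * deriv (deriv φm) α = βp * deriv (deriv φp) α := by
  intro ρ D hD φm φp
  have hβm' : βm ≠ 0 := ne_of_gt hβm
  have hβp' : βp ≠ 0 := ne_of_gt hβp
  have hρ : ρ ≠ 0 := div_ne_zero hβm' hβp'
  have h32 : x3 - x2 ≠ 0 := sub_ne_zero.mpr (ne_of_gt h23)
  -- rewrite branches as explicit quadratics
  have hm : φm = fun x =>
      (((x1 - α) - ρ * (x3 - α)) / (D * ρ * (x3 - x2))) * x ^ 2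
      + ((-(x1 - α) * (α + x1) + ρ * (x3 - α) * (α + x3)) / (D * ρ * (x3 - x2))) * x
      + (((x1 - α) * α * x1 - ρ * (x3 - α) * x1 * (α + x3 - x1)) / (D * ρ * (x3 - x2))) := by
    funext x
    show ((x1 - α) * (x - α) * (x - x1)
        - ρ * (x3 - α) * (x - x1) * (x - (α + x3 - x1))) / (D * ρ * (x3 - x2)) = _
    ring
  have hp : φp = fun x =>
      (((x1 - α) - ρ * (x3 - α)) / (D * (x3 - x2))) * x ^ 2
      + ((-(x1 - α) * (α + x1) + ρ * (x3 - α) * (α + x3)) / (D * (x3 - x2))) * x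
      + ((-(x1 - α) * x3 * (x3 - α - x1) - ρ * (x3 - α) * α * x3) / (D * (x3 - x2))) := by
    funext x
    show ((x1 - α) * (x - x3) * (x + (x3 - α - x1))
        - ρ * (x3 - α) * (x - α) * (x - x3)) / (D * (x3 - x2)) = _
    ring
  have hDdef : D = (α - x1) * (x2 - x1) + (α - x1) * (x3 - α) + ρ * (α - x2) * (α - x3) := rfl
  have hρdef : ρ = βm / βp := rfl
  refine ⟨?_, ?_, ?_, ?_, ?_, ?_⟩
  · show ((x1 - α) * (x1 - α) * (x1 - x1)
        - ρ * (x3 - α) * (x1 - x1) * (x1 - (α + x3 - x1))) / (D * ρ * (x3 - x2)) = 0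
    simp
  · show ((x1 - α) * (x2 - x3) * (x2 + (x3 - α - x1))
        - ρ * (x3 - α) * (x2 - α) * (x2 - x3)) / (D * (x3 - x2)) = 1
    rw [div_eq_one_iff_eq (mul_ne_zero hD h32), hDdef, hmid]
    ring
  · show ((x1 - α) * (x3 - x3) * (x3 + (x3 - α - x1))
        - ρ * (x3 - α) * (x3 - α) * (x3 - x3)) / (D * (x3 - x2)) = 0
    simp
  · show ((x1 - α) * (α - α) * (α - x1)
        - ρ * (x3 - α) * (α - x1) * (α - (α + x3 - x1))) / (D * ρ * (x3 - x2))
      = ((x1 - α) * (α - x3) * (α + (x3 - α - x1))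
        - ρ * (x3 - α) * (α - α) * (α - x3)) / (D * (x3 - x2))
    field_simp
    ring
  · rw [hm, hp, quad_deriv, quad_deriv]
    have : ρ = βm / βp := rfl
    rw [this]
    field_simp
  · rw [hm, hp, quad_deriv, quad_deriv, lin_deriv, lin_deriv]
    have : ρ = βm / βp := rfl
    rw [this]
    field_simp
end

section
/- Let β⁻, β⁺ > 0 and set ρ = β⁻/β⁺. Let x1 < x2 < x3 with x2 = (x1+x3)/2, let α ∈ (x1,x2), and assume D := (α-x1)(x2-x1) + (α-x1)(x3-α) + ρ(α-x2)(α-x3) ≠ 0. Then the IFE basis function φ3 satisfies: (a) the nodal conditions φ3(x1) = 0, φ3(x2) = 0, φ3(x3) = 1; (b) the matching conditions at the interface: φ3(α⁻) = φ3(α⁺), β⁻ φ3'(α⁻) = β⁺ φ3'(α⁺), and β⁻ φ3''(α⁻) = β⁺ φ3''(α⁺), where one-sided values are taken from the two quadratic branches. -/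
private lemma quad_deriv2 (a b c : ℝ) :
    deriv (deriv (fun x : ℝ => a * x ^ 2 + b * x + c)) = fun _ => 2 * a := by
  rw [quad_deriv]
  funext x
  have h : HasDerivAt (fun x : ℝ => 2 * a * x + b) (2 * a) x := by
    simpa using ((hasDerivAt_id x).const_mul (2 * a)).add_const b
  exact h.deriv

/-- Nodal and interface matching conditions for the quadratic IFE basis function `φ3`
(with left branch `φm` on `(x1,α)` and right branch `φp` on `(α,x3)`). -/
theorem stmt_7 (βm βp x1 x2 x3 α : ℝ) (hβm : 0 < βm) (hβp : 0 < βp)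
    (h12 : x1 < x2) (h23 : x2 < x3) (hmid : x2 = (x1 + x3) / 2)
    (hα : α ∈ Set.Ioo x1 x2) :
    let ρ := βm / βp
    let D := (α - x1) * (x2 - x1) + (α - x1) * (x3 - α) + ρ * (α - x2) * (α - x3)
    D ≠ 0 →
    let φm : ℝ → ℝ := fun x =>
      ((α - x1) * (x - α) * (x - x1)
        - ρ * (α - x2) * (x - x1) * (x - (α + x2 - x1))) / (D * ρ * (x3 - x2))
    let φp : ℝ → ℝ := fun x =>
      ((α - x1) * (x - x2) * (x - (α + x1 - x2))
        - ρ * (α - x2) * (x - α) * (x - x2)) / (D * (x3 - x2))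
    -- (a) nodal conditions
    φm x1 = 0 ∧ φp x2 = 0 ∧ φp x3 = 1 ∧
    -- (b) matching conditions at the interface
    φm α = φp α ∧
    βm * deriv φm α = βp * deriv φp α ∧
    βm * deriv (deriv φm) α = βp * deriv (deriv φp) α := by
  intro ρ D hD φm φp
  have hρdef : ρ = βm / βp := rfl
  have hDdef : D = (α - x1) * (x2 - x1) + (α - x1) * (x3 - α)
      + ρ * (α - x2) * (α - x3) := rfl
  have hβm' : βm ≠ 0 := ne_of_gt hβm
  have hβp' : βp ≠ 0 := ne_of_gt hβp
  have hρ : ρ ≠ 0 := by rw [hρdef]; exact div_ne_zero hβm' hβp'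
  have h32 : x3 - x2 ≠ 0 := sub_ne_zero.2 (ne_of_gt h23)
  have hβ : βm = ρ * βp := by rw [hρdef]; field_simp
  have hφm : φm = fun x : ℝ =>
      (((α - x1) - ρ * (α - x2)) / (D * ρ * (x3 - x2))) * x ^ 2
      + ((ρ * (α - x2) * (α + x2) - (α - x1) * (α + x1)) / (D * ρ * (x3 - x2))) * x
      + (((α - x1) * α * x1 - ρ * (α - x2) * x1 * (α + x2 - x1)) / (D * ρ * (x3 - x2))) := by
    funext x; show (_ : ℝ) = _; ring
  have hφp : φp = fun x : ℝ =>
      (((α - x1) - ρ * (α - x2)) / (D * (x3 - x2))) * x ^ 2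
      + ((ρ * (α - x2) * (α + x2) - (α - x1) * (α + x1)) / (D * (x3 - x2))) * x
      + (((α - x1) * x2 * (α + x1 - x2) - ρ * (α - x2) * α * x2) / (D * (x3 - x2))) := by
    funext x; show (_ : ℝ) = _; ring
  refine ⟨?_, ?_, ?_, ?_, ?_, ?_⟩
  · show (((α - x1) * (x1 - α) * (x1 - x1)
        - ρ * (α - x2) * (x1 - x1) * (x1 - (α + x2 - x1))) / (D * ρ * (x3 - x2))) = 0
    rw [div_eq_zero_iff]; left; ring
  · show (((α - x1) * (x2 - x2) * (x2 - (α + x1 - x2))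
        - ρ * (α - x2) * (x2 - α) * (x2 - x2)) / (D * (x3 - x2))) = 0
    rw [div_eq_zero_iff]; left; ring
  · show (((α - x1) * (x3 - x2) * (x3 - (α + x1 - x2))
        - ρ * (α - x2) * (x3 - α) * (x3 - x2)) / (D * (x3 - x2))) = 1
    rw [div_eq_one_iff_eq (mul_ne_zero hD h32), hDdef]
    ring
  · show (((α - x1) * (α - α) * (α - x1)
        - ρ * (α - x2) * (α - x1) * (α - (α + x2 - x1))) / (D * ρ * (x3 - x2)))
      = (((α - x1) * (α - x2) * (α - (α + x1 - x2))
        - ρ * (α - x2) * (α - α) * (α - x2)) / (D * (x3 - x2)))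
    field_simp
    ring
  · rw [hφm, hφp, quad_deriv, quad_deriv, hβ]
    field_simp
  · rw [hφm, hφp, quad_deriv2, quad_deriv2, hβ]
    field_simp
end

section
/- Let 0 < ξ < α < 1, let β⁻, β⁺ > 0, let β(x) = β⁻ on (0,α) and β(x) = β⁺ on (α,1), and let G be the piecewise affine Green's function with source ξ, so that β G' equals the constant A on (0,ξ) and the constant A-1 on (ξ,α) and on (α,1), where A = ((α-ξ)/β⁻ + (1-α)/β⁺)/(α/β⁻ + (1-α)/β⁺). Then for every function e that is continuous on [0,1], continuously differentiable on each of [0,ξ], [ξ,α], [α,1], and satisfies e(0) = e(1) = 0, one has ∫_0^ξ β G' e' dx + ∫_ξ^α β G' e' dx + ∫_α^1 β G' e' dx = e(ξ). -/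
open Set intervalIntegral

lemma ftc_aux (a b : ℝ) (hab : a ≤ b) (f f' : ℝ → ℝ)
    (hd : ∀ x ∈ Icc a b, HasDerivWithinAt f (f' x) (Icc a b) x)
    (hc : ContinuousOn f' (Icc a b)) :
    ∫ x in a..b, f' x = f b - f a := by
  apply intervalIntegral.integral_eq_sub_of_hasDeriv_right_of_le hab
  · exact fun x hx => (hd x hx).continuousWithinAt
  · intro x hx
    exact ((hd x (Ioo_subset_Icc_self hx)).hasDerivAt (Icc_mem_nhds hx.1 hx.2)).hasDerivWithinAt
  · exact hc.intervalIntegrable_of_Icc hab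

/-- Green's function representation identity: testing `a(G,e) = ∫ β G' e'` with the
piecewise affine Green's function (source `ξ`, `β G' = A` on `(0,ξ)` and `A-1` on
`(ξ,α)` and `(α,1)`) reproduces the point value `e ξ`, for any `e` continuous on
`[0,1]`, piecewise `C¹`, with `e 0 = e 1 = 0`. -/
theorem stmt_9 (ξ α βm βp : ℝ) (h0ξ : 0 < ξ) (hξα : ξ < α) (hα1 : α < 1)
    (hβm : 0 < βm) (hβp : 0 < βp)
    (e e1 e2 e3 : ℝ → ℝ)
    (hec : ContinuousOn e (Icc 0 1))
    (he1 : ∀ x ∈ Icc (0:ℝ) ξ, HasDerivWithinAt e (e1 x) (Icc (0:ℝ) ξ) x)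
    (he1c : ContinuousOn e1 (Icc 0 ξ))
    (he2 : ∀ x ∈ Icc ξ α, HasDerivWithinAt e (e2 x) (Icc ξ α) x)
    (he2c : ContinuousOn e2 (Icc ξ α))
    (he3 : ∀ x ∈ Icc α (1:ℝ), HasDerivWithinAt e (e3 x) (Icc α (1:ℝ)) x)
    (he3c : ContinuousOn e3 (Icc α 1))
    (he0 : e 0 = 0) (heOne : e 1 = 0) :
    let A := ((α - ξ) / βm + (1 - α) / βp) / (α / βm + (1 - α) / βp)
    (∫ x in (0:ℝ)..ξ, βm * (A / βm) * e1 x)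
      + (∫ x in ξ..α, βm * ((A - 1) / βm) * e2 x)
      + (∫ x in α..(1:ℝ), βp * ((A - 1) / βp) * e3 x) = e ξ := by
  intro A
  have hβm' : βm ≠ 0 := hβm.ne'
  have hβp' : βp ≠ 0 := hβp.ne'
  have c1 : βm * (A / βm) = A := by field_simp
  have c2 : βm * ((A - 1) / βm) = A - 1 := by field_simp
  have c3 : βp * ((A - 1) / βp) = A - 1 := by field_simp
  rw [c1, c2, c3]
  have i1 : (∫ x in (0:ℝ)..ξ, A * e1 x) = A * (e ξ - e 0) := by
    rw [intervalIntegral.integral_const_mul,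
      ftc_aux 0 ξ h0ξ.le e e1 he1 he1c]
  have i2 : (∫ x in ξ..α, (A - 1) * e2 x) = (A - 1) * (e α - e ξ) := by
    rw [intervalIntegral.integral_const_mul,
      ftc_aux ξ α hξα.le e e2 he2 he2c]
  have i3 : (∫ x in α..(1:ℝ), (A - 1) * e3 x) = (A - 1) * (e 1 - e α) := by
    rw [intervalIntegral.integral_const_mul,
      ftc_aux α 1 hα1.le e e3 he3 he3c]
  rw [i1, i2, i3, he0, heOne]
  ring
end

section
/- Let a = t₀ < t₁ < ... < t_n = b be a partition, let α ∈ (t_k, t_{k+1}) for some k, let β⁻, β⁺ > 0, and let β(x) = β⁻ on (a,α), β(x) = β⁺ on (α,b). Define V_h to be the set of continuous functions v : [a,b] → ℝ with v(a) = v(b) = 0 such that v restricted to each element [t_j, t_{j+1}] with j ≠ k is a polynomial of degree ≤ 2, and v restricted to [t_k, α] and to [α, t_{k+1}] is a polynomial of degree ≤ 2 with β⁻ v'(α⁻) = β⁺ v'(α⁺) and β⁻ v''(α⁻) = β⁺ v''(α⁺). Suppose e : [a,b] → ℝ is continuous with e(a) = e(b) = 0, continuously differentiable on each element [t_j, t_{j+1}]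 (j ≠ k) and on [t_k, α] and [α, t_{k+1}], and satisfies the Galerkin orthogonality ∫_a^b β e' v' dx = 0 for every v ∈ V_h (the integral split at the nodes and at α). Then e(t_i) = 0 for every i = 0, 1, ..., n. -/
open Set intervalIntegral

/-- The quadratic immersed finite element space `V_h` on the partition `t 0 < ... < t n`
with interface point `α ∈ (t k, t (k+1))`: continuous functions vanishing at the
endpoints, quadratic polynomials on each non-interface element, and piecewise
quadratic on the interface element with the jump conditions
`β⁻ v'(α⁻) = β⁺ v'(α⁺)` and `β⁻ v''(α⁻) = β⁺ v''(α⁺)`. -/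
def IsVhQuad (α βm βp : ℝ) (n k : ℕ) (t : ℕ → ℝ) (v : ℝ → ℝ) : Prop :=
  ContinuousOn v (Icc (t 0) (t n)) ∧ v (t 0) = 0 ∧ v (t n) = 0 ∧
  (∀ j < n, j ≠ k → ∃ P : Polynomial ℝ, P.degree ≤ 2 ∧
      ∀ x ∈ Icc (t j) (t (j + 1)), v x = P.eval x) ∧
  (∃ P Q : Polynomial ℝ, P.degree ≤ 2 ∧ Q.degree ≤ 2 ∧
      (∀ x ∈ Icc (t k) α, v x = P.eval x) ∧
      (∀ x ∈ Icc α (t (k + 1)), v x = Q.eval x) ∧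
      βm * P.derivative.eval α = βp * Q.derivative.eval α ∧
      βm * P.derivative.derivative.eval α = βp * Q.derivative.derivative.eval α)

section Aux

open MeasureTheory Polynomial

lemma ftc_derivWithin' (c d : ℝ) (hcd : c < d) (e : ℝ → ℝ)
    (he : ContDiffOn ℝ 1 e (Icc c d)) :
    ∫ x in c..d, derivWithin e (Icc c d) x = e d - e c := by
  apply intervalIntegral.integral_eq_sub_of_hasDeriv_right_of_le hcd.le he.continuousOn
  · intro x hx
    have hmem : Icc c d ∈ nhds x := Icc_mem_nhds hx.1 hx.2
    have := ((he.differentiableOn one_ne_zero) x (Ioo_subset_Icc_self hx)).hasDerivWithinAt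
    exact ((this.hasDerivAt hmem)).hasDerivWithinAt
  · exact ContinuousOn.intervalIntegrable (μ := volume)
      (by rw [uIcc_of_le hcd.le]
          exact he.continuousOn_derivWithin (uniqueDiffOn_Icc hcd) le_rfl)

lemma derivWithin_affine' (s q c d x : ℝ) (hcd : c < d) (v : ℝ → ℝ)
    (hv : ∀ y ∈ Icc c d, v y = s * y + q) (hx : x ∈ Icc c d) :
    derivWithin v (Icc c d) x = s := by
  have h1 : derivWithin v (Icc c d) x = derivWithin (fun y => s*y+q) (Icc c d) x :=
    derivWithin_congr hv (hv x hx)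
  rw [h1]
  have h2 : HasDerivAt (fun y : ℝ => s*y+q) s x := by
    simpa using ((hasDerivAt_id x).const_mul s).add_const q
  exact h2.hasDerivWithinAt.derivWithin (uniqueDiffOn_Icc hcd x hx)

lemma elem_int' (β e v : ℝ → ℝ) (K s q c d : ℝ) (hcd : c < d)
    (hβ : ∀ x ∈ Ioo c d, β x = K)
    (he : ContDiffOn ℝ 1 e (Icc c d))
    (hv : ∀ x ∈ Icc c d, v x = s * x + q) :
    ∫ x in c..d, β x * derivWithin e (Icc c d) x * derivWithin v (Icc c d) x
      = K * s * (e d - e c) := by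
  have h1 : ∫ x in c..d, β x * derivWithin e (Icc c d) x * derivWithin v (Icc c d) x
      = ∫ x in c..d, (K * s) * derivWithin e (Icc c d) x := by
    apply intervalIntegral.integral_congr_ae
    have hd : ∀ᵐ x : ℝ, x ≠ d := by
      refine (MeasureTheory.ae_iff).mpr ?_
      simp only [not_not]
      simp [Set.setOf_eq_eq_singleton]
    filter_upwards [hd] with x hxd hxI
    rw [Set.uIoc_of_le hcd.le] at hxI
    have hxo : x ∈ Ioo c d := ⟨hxI.1, lt_of_le_of_ne hxI.2 hxd⟩
    rw [hβ x hxo, derivWithin_affine' s q c d x hcd v hv (Ioo_subset_Icc_self hxo)]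
    ring
  rw [h1, intervalIntegral.integral_const_mul, ftc_derivWithin' c d hcd e he]

lemma lin_facts' (s q : ℝ) :
    (C s * X + C q : Polynomial ℝ).degree ≤ 2 ∧
    (∀ x : ℝ, (C s * X + C q : Polynomial ℝ).eval x = s * x + q) ∧
    (C s * X + C q : Polynomial ℝ).derivative = C s := by
  refine ⟨(Polynomial.degree_linear_le).trans (by norm_num), fun x => by simp, by simp⟩

lemma master' (β W e v : ℝ → ℝ) (c d K qW cv cq : ℝ) (hcd : c < d) (hK : 0 < K)
    (hW : ∀ x ∈ Icc c d, W x = x / K + qW)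
    (hv : ∀ x ∈ Icc c d, v x = cv * W x + cq)
    (hβc : ∀ x ∈ Ioo c d, β x = K)
    (he : ContDiffOn ℝ 1 e (Icc c d)) :
    (∀ x ∈ Icc c d, v x = (cv / K) * x + (cv * qW + cq)) ∧
    ∫ x in c..d, β x * derivWithin e (Icc c d) x * derivWithin v (Icc c d) x
      = cv * (e d - e c) := by
  have haff : ∀ x ∈ Icc c d, v x = (cv / K) * x + (cv * qW + cq) := by
    intro x hx
    rw [hv x hx, hW x hx]
    field_simp
    ring
  refine ⟨haff, ?_⟩
  rw [elem_int' β e v K (cv / K) (cv * qW + cq) c d hcd hβc he haff]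
  field_simp

end Aux

/-- Exactness at end nodes: if `e` is continuous, vanishes at the boundary, is
piecewise `C¹`, and satisfies the Galerkin orthogonality `∫ β e' v' = 0` for all
`v ∈ V_h` (integrals split at the nodes and at `α`), then `e` vanishes at every node. -/
theorem stmt_10 (n k : ℕ) (t : ℕ → ℝ) (α βm βp : ℝ)
    (hk : k < n) (hmono : ∀ j < n, t j < t (j + 1))
    (hα : α ∈ Ioo (t k) (t (k + 1)))
    (hβm : 0 < βm) (hβp : 0 < βp)
    (β : ℝ → ℝ) (hβ : β = fun x => if x < α then βm else βp)
    (e : ℝ → ℝ)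
    (hec : ContinuousOn e (Icc (t 0) (t n)))
    (hea : e (t 0) = 0) (heb : e (t n) = 0)
    (hereg : ∀ j < n, j ≠ k → ContDiffOn ℝ 1 e (Icc (t j) (t (j + 1))))
    (heregk1 : ContDiffOn ℝ 1 e (Icc (t k) α))
    (heregk2 : ContDiffOn ℝ 1 e (Icc α (t (k + 1))))
    (horth : ∀ v : ℝ → ℝ, IsVhQuad α βm βp n k t v →
      (∑ j ∈ Finset.range n,
        if j = k then
          (∫ x in t k..α,
            β x * derivWithin e (Icc (t k) α) x * derivWithin v (Icc (t k) α) x)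
          + (∫ x in α..t (k + 1),
            β x * derivWithin e (Icc α (t (k + 1))) x * derivWithin v (Icc α (t (k + 1))) x)
        else
          ∫ x in t j..t (j + 1),
            β x * derivWithin e (Icc (t j) (t (j + 1))) x
              * derivWithin v (Icc (t j) (t (j + 1))) x) = 0) :
    ∀ i ≤ n, e (t i) = 0 := by
  classical
  have tlt : ∀ i j : ℕ, i < j → j ≤ n → t i < t j := by
    intro i j hij hjn
    induction j with
    | zero => omega
    | succ j ih =>
      rcases (by omega : i < j ∨ i = j) with h | h
      · exact (ih h (by omega)).trans (hmono j (by omega))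
      · subst h; exact hmono i (by omega)
  have tle : ∀ i j : ℕ, i ≤ j → j ≤ n → t i ≤ t j := by
    intro i j hij hjn
    rcases Nat.eq_or_lt_of_le hij with h | h
    · rw [h]
    · exact (tlt i j h hjn).le
  intro i hi
  rcases Nat.eq_zero_or_pos i with h0 | h0
  · subst h0; exact hea
  rcases Nat.eq_or_lt_of_le hi with hn | hn
  · rw [hn]; exact heb
  -- Now 0 < i < n. Construct the piecewise-affine Green's test function.
  set W : ℝ → ℝ := fun x => (min x α - t 0)/βm + (max x α - α)/βp with hWdef
  have hta : t 0 ≤ α := (tle 0 k (Nat.zero_le k) hk.le).trans hα.1.le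
  have hW0 : W (t 0) = 0 := by
    simp [hWdef, min_eq_left hta, max_eq_right hta]
  have hWle : ∀ x y : ℝ, x ≤ y → W x ≤ W y := by
    intro x y hxy
    have h1 : min x α ≤ min y α := min_le_min hxy le_rfl
    have h2 : max x α ≤ max y α := max_le_max hxy le_rfl
    simp only [hWdef]
    gcongr
  have hWlt : ∀ x y : ℝ, x < y → W x < W y := by
    intro x y hxy
    rcases le_or_gt y α with hy | hy
    · have hx : x ≤ α := hxy.le.trans hy
      simp only [hWdef, min_eq_left hx, min_eq_left hy, max_eq_right hx, max_eq_right hy]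
      have : (x - t 0)/βm < (y - t 0)/βm := by gcongr
      linarith
    · rcases le_or_gt x α with hx | hx
      · simp only [hWdef, min_eq_left hx, min_eq_right hy.le, max_eq_right hx, max_eq_left hy.le]
        have h1 : (x - t 0)/βm ≤ (α - t 0)/βm := by gcongr
        have h2 : (α - α)/βp < (y - α)/βp := by gcongr <;> linarith
        linarith
      · simp only [hWdef, min_eq_right hy.le, min_eq_right hx.le,
          max_eq_left hy.le, max_eq_left hx.le]
        have : (x - α)/βp < (y - α)/βp := by gcongr
        linarith
  have hWm : 0 < W (t i) := by
    have := hWlt (t 0) (t i) (tlt 0 i h0 hn.le)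
    rw [hW0] at this; exact this
  have hWmn : W (t i) < W (t n) := hWlt _ _ (tlt i n hn le_rfl)
  set A : ℝ := 1 / W (t i) with hAdef
  set B : ℝ := -(1 / (W (t n) - W (t i))) with hBdef
  have hApos : 0 < A := by rw [hAdef]; positivity
  have hBneg : B < 0 := by
    rw [hBdef]; simp only [neg_lt, neg_zero]
    have : 0 < W (t n) - W (t i) := by linarith
    positivity
  have hA1 : A * W (t i) = 1 := one_div_mul_cancel hWm.ne'
  have hB1 : B * (W (t i) - W (t n)) = 1 := by
    rw [hBdef]
    have h : W (t n) - W (t i) ≠ 0 := by linarith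
    field_simp
    ring
  set v : ℝ → ℝ := fun x => min (A * W x) (B * (W x - W (t n))) with hvdef
  have hvA : ∀ x : ℝ, W x ≤ W (t i) → v x = A * W x := by
    intro x hx
    apply min_eq_left
    have h1 : A * W x ≤ 1 := by
      calc A * W x ≤ A * W (t i) := by gcongr
      _ = 1 := hA1
    have h2 : (1:ℝ) ≤ B * (W x - W (t n)) := by
      nlinarith [mul_nonneg (neg_nonneg.mpr hBneg.le) (sub_nonneg.mpr hx)]
    linarith
  have hvB : ∀ x : ℝ, W (t i) ≤ W x → v x = B * (W x - W (t n)) := by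
    intro x hx
    apply min_eq_right
    have h1 : B * (W x - W (t n)) ≤ 1 := by
      nlinarith [mul_nonneg (neg_nonneg.mpr hBneg.le) (sub_nonneg.mpr hx)]
    have h2 : (1:ℝ) ≤ A * W x := by
      calc (1:ℝ) = A * W (t i) := hA1.symm
      _ ≤ A * W x := by gcongr
    linarith
  have hWcont : Continuous W := by
    rw [hWdef]
    apply Continuous.add
    · exact ((continuous_id.min continuous_const).sub continuous_const).div_const βm
    · exact ((continuous_id.max continuous_const).sub continuous_const).div_const βp
  have hvcont : Continuous v := by
    rw [hvdef]
    exact (continuous_const.mul hWcont).min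
      (continuous_const.mul (hWcont.sub continuous_const))
  have hWL : ∀ x : ℝ, x ≤ α → W x = x / βm + (-(t 0) / βm) := by
    intro x hx
    simp only [hWdef, min_eq_left hx, max_eq_right hx]
    ring
  have hWR : ∀ x : ℝ, α ≤ x → W x = x / βp + ((α - t 0) / βm - α / βp) := by
    intro x hx
    simp only [hWdef, min_eq_right hx, max_eq_left hx]
    ring
  -- per non-interface element data
  have helem : ∀ j, j < n → j ≠ k →
      (∃ s q : ℝ, ∀ x ∈ Icc (t j) (t (j+1)), v x = s * x + q) ∧
      (∫ x in t j..t (j+1), β x * derivWithin e (Icc (t j) (t (j+1))) x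
          * derivWithin v (Icc (t j) (t (j+1))) x)
        = (if j < i then A else B) * (e (t (j+1)) - e (t j)) := by
    intro j hj hjk
    have hcd : t j < t (j+1) := hmono j hj
    obtain ⟨K, qW, hKpos, hWaff, hβc⟩ :
        ∃ K qW : ℝ, 0 < K ∧ (∀ x ∈ Icc (t j) (t (j+1)), W x = x / K + qW) ∧
          (∀ x ∈ Ioo (t j) (t (j+1)), β x = K) := by
      rcases lt_or_gt_of_ne hjk with hlt | hgt
      · refine ⟨βm, -(t 0)/βm, hβm, ?_, ?_⟩
        · intro x hx
          exact hWL x (le_trans hx.2 (le_trans (tle (j+1) k hlt hk.le) hα.1.le))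
        · intro x hx
          have hxα : x < α :=
            lt_of_lt_of_le hx.2 (le_trans (tle (j+1) k hlt hk.le) hα.1.le)
          simp [hβ, hxα]
      · refine ⟨βp, (α - t 0)/βm - α/βp, hβp, ?_, ?_⟩
        · intro x hx
          exact hWR x (le_trans (le_trans hα.2.le (tle (k+1) j hgt hj.le)) hx.1)
        · intro x hx
          have hxα : ¬ x < α :=
            not_lt.mpr (le_trans (le_trans hα.2.le (tle (k+1) j hgt hj.le)) hx.1.le)
          simp [hβ, hxα]
    by_cases hji : j < i
    · have hvb : ∀ x ∈ Icc (t j) (t (j+1)), v x = A * W x + 0 := by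
        intro x hx
        rw [hvA x (hWle x (t i) (le_trans hx.2 (tle (j+1) i hji hn.le)))]
        ring
      have hm := master' β W e v (t j) (t (j+1)) K qW A 0 hcd hKpos hWaff hvb hβc
        (hereg j hj hjk)
      rw [if_pos hji]
      exact ⟨⟨A/K, A*qW + 0, hm.1⟩, hm.2⟩
    · have hvb : ∀ x ∈ Icc (t j) (t (j+1)), v x = B * W x + (-(B * W (t n))) := by
        intro x hx
        rw [hvB x (hWle (t i) x (le_trans (tle i j (not_lt.mp hji) hj.le) hx.1))]
        ring
      have hm := master' β W e v (t j) (t (j+1)) K qW B (-(B * W (t n))) hcd hKpos hWaff hvb hβc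
        (hereg j hj hjk)
      rw [if_neg hji]
      exact ⟨⟨B/K, B*qW + (-(B * W (t n))), hm.1⟩, hm.2⟩
  -- interface element data
  have hβcL : ∀ x ∈ Ioo (t k) α, β x = βm := by
    intro x hx; simp [hβ, hx.2]
  have hβcR : ∀ x ∈ Ioo α (t (k+1)), β x = βp := by
    intro x hx; simp [hβ, not_lt.mpr hx.1.le]
  have hWaffL : ∀ x ∈ Icc (t k) α, W x = x / βm + (-(t 0) / βm) :=
    fun x hx => hWL x hx.2
  have hWaffR : ∀ x ∈ Icc α (t (k+1)), W x = x / βp + ((α - t 0) / βm - α / βp) :=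
    fun x hx => hWR x hx.1
  obtain ⟨cv, hcvif, hvbL, hvbR⟩ :
      ∃ cv : ℝ, cv = (if k < i then A else B) ∧
        (∃ cq : ℝ, ∀ x ∈ Icc (t k) α, v x = cv * W x + cq) ∧
        (∃ cq : ℝ, ∀ x ∈ Icc α (t (k+1)), v x = cv * W x + cq) := by
    by_cases hki : k < i
    · refine ⟨A, (if_pos hki).symm, ⟨0, ?_⟩, ⟨0, ?_⟩⟩
      · intro x hx
        have : W x ≤ W (t i) :=
          hWle x (t i) (le_trans hx.2 (le_trans hα.2.le (tle (k+1) i hki hn.le)))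
        rw [hvA x this]; ring
      · intro x hx
        have : W x ≤ W (t i) := hWle x (t i) (le_trans hx.2 (tle (k+1) i hki hn.le))
        rw [hvA x this]; ring
    · refine ⟨B, (if_neg hki).symm, ⟨-(B * W (t n)), ?_⟩, ⟨-(B * W (t n)), ?_⟩⟩
      · intro x hx
        have : W (t i) ≤ W x := hWle (t i) x (le_trans (tle i k (not_lt.mp hki) hk.le) hx.1)
        rw [hvB x this]; ring
      · intro x hx
        have : W (t i) ≤ W x :=
          hWle (t i) x (le_trans (le_trans (tle i k (not_lt.mp hki) hk.le) hα.1.le) hx.1)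
        rw [hvB x this]; ring
  obtain ⟨cqL, hvbL⟩ := hvbL
  obtain ⟨cqR, hvbR⟩ := hvbR
  have hmL := master' β W e v (t k) α βm (-(t 0)/βm) cv cqL hα.1 hβm hWaffL hvbL hβcL heregk1
  have hmR := master' β W e v α (t (k+1)) βp ((α - t 0)/βm - α/βp) cv cqR hα.2 hβp
    hWaffR hvbR hβcR heregk2
  -- v is in the IFE space
  have hVh : IsVhQuad α βm βp n k t v := by
    refine ⟨hvcont.continuousOn, ?_, ?_, ?_, ?_⟩
    · rw [hvA (t 0) (by rw [hW0]; exact hWm.le), hW0]; ring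
    · rw [hvB (t n) hWmn.le]; ring
    · intro j hj hjk
      obtain ⟨s, q, hsq⟩ := (helem j hj hjk).1
      exact ⟨Polynomial.C s * Polynomial.X + Polynomial.C q, (lin_facts' s q).1,
        fun x hx => by rw [hsq x hx, (lin_facts' s q).2.1]⟩
    · refine ⟨Polynomial.C (cv/βm) * Polynomial.X + Polynomial.C (cv * (-(t 0)/βm) + cqL),
        Polynomial.C (cv/βp) * Polynomial.X + Polynomial.C (cv * ((α - t 0)/βm - α/βp) + cqR),
        (lin_facts' _ _).1, (lin_facts' _ _).1, ?_, ?_, ?_, ?_⟩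
      · intro x hx; rw [hmL.1 x hx, (lin_facts' _ _).2.1]
      · intro x hx; rw [hmR.1 x hx, (lin_facts' _ _).2.1]
      · rw [(lin_facts' _ _).2.2, (lin_facts' _ _).2.2]
        simp only [Polynomial.eval_C]
        field_simp
      · rw [(lin_facts' _ _).2.2, (lin_facts' _ _).2.2]
        simp
  have hsum := horth v hVh
  have hcongr : ∀ j ∈ Finset.range n,
      (if j = k then
          (∫ x in t k..α,
            β x * derivWithin e (Icc (t k) α) x * derivWithin v (Icc (t k) α) x)
          + (∫ x in α..t (k + 1),
            β x * derivWithin e (Icc α (t (k + 1))) x * derivWithin v (Icc α (t (k + 1))) x)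
        else
          ∫ x in t j..t (j + 1),
            β x * derivWithin e (Icc (t j) (t (j + 1))) x
              * derivWithin v (Icc (t j) (t (j + 1))) x)
      = (if j < i then A else B) * (e (t (j+1)) - e (t j)) := by
    intro j hj
    by_cases hjk : j = k
    · subst hjk
      rw [if_pos rfl, hmL.2, hmR.2, ← hcvif]
      ring
    · rw [if_neg hjk]
      exact (helem j (Finset.mem_range.mp hj) hjk).2
  rw [Finset.sum_congr rfl hcongr] at hsum
  have hsplit : ∑ j ∈ Finset.range n, (if j < i then A else B) * (e (t (j+1)) - e (t j))
      = A * (e (t i) - e (t 0)) + B * (e (t n) - e (t i)) := by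
    rw [Finset.range_eq_Ico, ← Finset.sum_Ico_consecutive _ (Nat.zero_le i) hn.le]
    congr 1
    · rw [← Finset.range_eq_Ico,
        Finset.sum_congr rfl (fun j hj => by rw [if_pos (Finset.mem_range.mp hj)]),
        ← Finset.mul_sum, Finset.sum_range_sub (fun j => e (t j))]
    · rw [Finset.sum_congr rfl
        (fun j hj => by rw [if_neg (not_lt.mpr (Finset.mem_Ico.mp hj).1)]),
        ← Finset.mul_sum]
      congr 1
      rw [Finset.sum_Ico_eq_sub _ hn.le, Finset.sum_range_sub (fun j => e (t j)),
        Finset.sum_range_sub (fun j => e (t j))]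
      ring
  rw [hsplit, hea, heb] at hsum
  have hfin : (A - B) * e (t i) = 0 := by linarith [hsum]
  rcases mul_eq_zero.mp hfin with h | h
  · linarith
  · exact h
end

section
/- Let t_k < α < t_{k+1}, let β⁻, β⁺ > 0, set 𝒜 = 1/(β⁻(t_{k+1}-α) + β⁺(α-t_k)), and define the bubble function b_h(x) = 𝒜(t_{k+1}-α)(x-t_k) for x ∈ [t_k, α], b_h(x) = 𝒜(α-t_k)(t_{k+1}-x) for x ∈ [α, t_{k+1}], and b_h(x) = 0 otherwise. Let β(x) = β⁻ for x < α and β(x) = β⁺ for x > α. Then: (a) b_h is continuous with b_h(t_k) = b_h(t_{k+1}) = 0; (b) the flux jump satisfies β⁺ b_h'(α⁺) - β⁻ b_h'(α⁻) = -1; (c) ∫_{t_k}^{t_{k+1}} β (b_h')² dx = 𝒜(α-t_k)(t_{k+1}-α) ≤ h/(4·min(β⁻,β⁺)), where h = t_{k+1} - t_k. -/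
open Set intervalIntegral

/-- The bubble function `b_h` on the interface element `[t_k, t_{k+1}]`:
continuity and boundary values, unit flux jump `β⁺ b'(α⁺) - β⁻ b'(α⁻) = -1`,
and the value and bound of its energy `∫ β (b')²`. -/
theorem stmt_11 (tk t1 α βm βp : ℝ) (h1 : tk < α) (h2 : α < t1)
    (hβm : 0 < βm) (hβp : 0 < βp) :
    let A := 1 / (βm * (t1 - α) + βp * (α - tk))
    let b : ℝ → ℝ := fun x =>
      if x < tk then 0
      else if x ≤ α then A * (t1 - α) * (x - tk)
      else if x ≤ t1 then A * (α - tk) * (t1 - x)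
      else 0
    let β : ℝ → ℝ := fun x => if x < α then βm else βp
    -- (a) continuity and boundary values
    Continuous b ∧ b tk = 0 ∧ b t1 = 0 ∧
    -- (b) unit flux jump at α
    βp * derivWithin b (Ici α) α - βm * derivWithin b (Iic α) α = -1 ∧
    -- (c) energy identity and bound
    ((∫ x in tk..α, β x * (derivWithin b (Icc tk α) x) ^ 2)
      + (∫ x in α..t1, β x * (derivWithin b (Icc α t1) x) ^ 2)
      = A * (α - tk) * (t1 - α)) ∧
    A * (α - tk) * (t1 - α) ≤ (t1 - tk) / (4 * min βm βp) := by
  intro A b β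
  have hD : 0 < βm * (t1 - α) + βp * (α - tk) := by nlinarith
  have hA : 0 < A := by positivity
  -- b as max/min formula
  have hbeq : b = fun x => A * max 0 (min ((t1 - α) * (x - tk)) ((α - tk) * (t1 - x))) := by
    funext x
    simp only [b]
    split_ifs with hx1 hx2 hx3
    · rw [max_eq_left (le_trans (min_le_left _ _) (by nlinarith)), mul_zero]
    · rw [min_eq_left (by nlinarith), max_eq_right (by nlinarith)]; ring
    · rw [min_eq_right (by nlinarith), max_eq_right (by nlinarith)]; ring
    · rw [max_eq_left (le_trans (min_le_right _ _) (by nlinarith)), mul_zero]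
  have hcont : Continuous b := by
    rw [hbeq]; fun_prop
  refine ⟨hcont, ?_, ?_, ?_, ?_, ?_⟩
  · simp [b, h1.le, lt_irrefl]
  · simp only [b]
    rw [if_neg (by linarith), if_neg (by linarith), if_pos le_rfl]
    ring
  · -- flux jump
    have hR : derivWithin b (Ici α) α = -(A * (α - tk)) := by
      have hg : HasDerivAt (fun x => A * (α - tk) * (t1 - x)) (-(A * (α - tk))) α := by
        simpa using (((hasDerivAt_id α).const_sub t1).const_mul (A * (α - tk)))
      have heq : b =ᶠ[nhdsWithin α (Ici α)] fun x => A * (α - tk) * (t1 - x) := by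
        filter_upwards [inter_mem_nhdsWithin (Ici α) (Iio_mem_nhds h2)] with x hx
        simp only [b]
        rw [if_neg (by simp at hx; linarith [hx.1])]
        rcases eq_or_lt_of_le (show α ≤ x from hx.1) with h | h
        · rw [if_pos (le_of_eq h.symm)]; rw [← h]; ring
        · rw [if_neg (not_le.2 h), if_pos (show x < t1 from hx.2).le]
      rw [heq.derivWithin_eq (by simp [b, not_lt.2 h1.le]; ring)]
      exact hg.hasDerivWithinAt.derivWithin (uniqueDiffOn_Ici α α self_mem_Ici)
    have hL : derivWithin b (Iic α) α = A * (t1 - α) := by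
      have hg : HasDerivAt (fun x => A * (t1 - α) * (x - tk)) (A * (t1 - α)) α := by
        simpa using (((hasDerivAt_id α).sub_const tk).const_mul (A * (t1 - α)))
      have heq : b =ᶠ[nhdsWithin α (Iic α)] fun x => A * (t1 - α) * (x - tk) := by
        filter_upwards [inter_mem_nhdsWithin (Iic α) (Ioi_mem_nhds h1)] with x hx
        simp only [b]
        simp only [mem_inter_iff, mem_Iic, mem_Ioi] at hx
        rw [if_neg (by linarith [hx.2]), if_pos hx.1]
      rw [heq.derivWithin_eq (by simp [b, not_lt.2 h1.le])]
      exact hg.hasDerivWithinAt.derivWithin (uniqueDiffOn_Iic α α self_mem_Iic)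
    rw [hR, hL]
    have : A * (βm * (t1 - α) + βp * (α - tk)) = 1 := by
      simp only [A]; field_simp
    nlinarith [this]
  · -- energy identity
    have hderL : ∀ x ∈ Icc tk α, derivWithin b (Icc tk α) x = A * (t1 - α) := by
      intro x hx
      have hb : ∀ y ∈ Icc tk α, b y = A * (t1 - α) * (y - tk) := by
        intro y hy
        simp only [b]
        rw [if_neg (not_lt.2 hy.1), if_pos hy.2]
      rw [derivWithin_congr hb (hb x hx)]
      exact (((hasDerivAt_id x).sub_const tk).const_mul (A * (t1 - α))).hasDerivWithinAt.derivWithin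
        ((uniqueDiffOn_Icc h1) x hx) |>.trans (by simp)
    have hderR : ∀ x ∈ Icc α t1, derivWithin b (Icc α t1) x = -(A * (α - tk)) := by
      intro x hx
      have hb : ∀ y ∈ Icc α t1, b y = A * (α - tk) * (t1 - y) := by
        intro y hy
        simp only [b]
        rw [if_neg (by push_neg; linarith [hy.1])]
        rcases eq_or_lt_of_le hy.1 with h | h
        · rw [if_pos (le_of_eq h.symm), ← h]; ring
        · rw [if_neg (not_le.2 h), if_pos hy.2]
      rw [derivWithin_congr hb (hb x hx)]
      have hg : HasDerivAt (fun y => A * (α - tk) * (t1 - y)) (-(A * (α - tk))) x := by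
        simpa using (((hasDerivAt_id x).const_sub t1).const_mul (A * (α - tk)))
      exact hg.hasDerivWithinAt.derivWithin ((uniqueDiffOn_Icc h2) x hx)
    have hI1 : (∫ x in tk..α, β x * (derivWithin b (Icc tk α) x) ^ 2)
        = (α - tk) * (βm * (A * (t1 - α)) ^ 2) := by
      rw [intervalIntegral.integral_congr_ae ?_, intervalIntegral.integral_const]
      · rw [smul_eq_mul]
      · have hne : ∀ᵐ x : ℝ, x ≠ α := by
          refine MeasureTheory.ae_iff.2 ?_
          simpa using MeasureTheory.measure_singleton (μ := (MeasureTheory.volume : MeasureTheory.Measure ℝ)) α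
        filter_upwards [hne] with x hxne hx
        rw [uIoc_of_le h1.le] at hx
        have hxlt : x < α := lt_of_le_of_ne hx.2 hxne
        rw [hderL x ⟨hx.1.le, hx.2⟩]
        simp only [β, if_pos hxlt]
    have hI2 : (∫ x in α..t1, β x * (derivWithin b (Icc α t1) x) ^ 2)
        = (t1 - α) * (βp * (A * (α - tk)) ^ 2) := by
      rw [intervalIntegral.integral_congr_ae ?_, intervalIntegral.integral_const]
      · rw [smul_eq_mul]
      · filter_upwards with x hx
        rw [uIoc_of_le h2.le] at hx
        rw [hderR x ⟨hx.1.le, hx.2⟩]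
        simp only [β, if_neg (not_lt.2 hx.1.le)]
        ring_nf
    rw [hI1, hI2]
    have hAD : A * (βm * (t1 - α) + βp * (α - tk)) = 1 := by simp only [A]; field_simp
    simp only [A]
    field_simp
  · -- bound
    have hm : 0 < min βm βp := lt_min hβm hβp
    simp only [A]
    rw [div_mul_eq_mul_div, div_mul_eq_mul_div, div_le_div_iff₀ hD (by positivity)]
    nlinarith [sq_nonneg ((α - tk) - (t1 - α)),
      mul_nonneg (sub_nonneg.2 (min_le_left βm βp)) (sub_pos.2 h2).le,
      mul_nonneg (sub_nonneg.2 (min_le_right βm βp)) (sub_pos.2 h1).le,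
      mul_nonneg hm.le (sq_nonneg ((α - tk) - (t1 - α))),
      mul_nonneg (mul_nonneg (sub_nonneg.2 (min_le_left βm βp)) (sub_pos.2 h2).le) (by linarith : (0:ℝ) ≤ t1 - tk),
      mul_nonneg (mul_nonneg (sub_nonneg.2 (min_le_right βm βp)) (sub_pos.2 h1).le) (by linarith : (0:ℝ) ≤ t1 - tk)]
end

section
/- Let a = t₀ < t₁ < ... < t_n = b, α ∈ (t_k, t_{k+1}), β⁻, β⁺ > 0, β(x) = β⁻ on (a,α) and β(x) = β⁺ on (α,b), and let V_h be the set of continuous functions v : [a,b] → ℝ with v(a) = v(b) = 0 that are polynomials of degree ≤ 2 on each element [t_j, t_{j+1}] with j ≠ k, and polynomials of degree ≤ 2 on [t_k,α] and [α,t_{k+1}] with β⁻ v'(α⁻) = β⁺ v'(α⁺) and β⁻ v''(α⁻) = β⁺ v''(α⁺). Let 𝒜 = 1/(β⁻(t_{k+1}-α) + β⁺(α-t_k)) and let b_h be the bubble function equal to 𝒜(t_{k+1}-α)(x-t_k) on [t_k,α], 𝒜(α-t_k)(t_{k+1}-x) on [α,t_{k+1}], and 0 elsewhere. Suppose e : [a,b]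 → ℝ is continuous with e(a) = e(b) = 0, continuously differentiable on each element and on [t_k,α], [α,t_{k+1}], and satisfies ∫_a^b β e' v' dx = 0 for all v ∈ V_h. Then e(α) = ∫_{t_k}^{t_{k+1}} β b_h' e' dx, and consequently |e(α)| ≤ (𝒜(α-t_k)(t_{k+1}-α))^{1/2} · (∫_a^b β (e')² dx)^{1/2}. -/
open Set intervalIntegral MeasureTheory

lemma congrB {c d : ℝ} (hcd : c ≤ d) {F G : ℝ → ℝ} (h : ∀ x ∈ Ioo c d, F x = G x) :
    ∫ x in c..d, F x = ∫ x in c..d, G x := by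
  apply intervalIntegral.integral_congr_ae
  have hnull : (volume : Measure ℝ) {d} = 0 := measure_singleton d
  filter_upwards [measure_eq_zero_iff_ae_notMem.mp hnull] with x hx hxI
  rw [Set.uIoc_of_le hcd] at hxI
  exact h x ⟨hxI.1, lt_of_le_of_ne hxI.2 (fun hxd => hx hxd)⟩

lemma ftcW {c d : ℝ} (hcd : c < d) {f : ℝ → ℝ} (hf : ContDiffOn ℝ 1 f (Icc c d)) :
    ∫ x in c..d, derivWithin f (Icc c d) x = f d - f c := by
  apply intervalIntegral.integral_eq_sub_of_hasDeriv_right_of_le hcd.le hf.continuousOn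
  · intro x hx
    have h1 : DifferentiableWithinAt ℝ f (Icc c d) x :=
      hf.differentiableOn one_ne_zero x (Ioo_subset_Icc_self hx)
    exact (h1.hasDerivWithinAt.hasDerivAt (Icc_mem_nhds hx.1 hx.2)).hasDerivWithinAt
  · have h2 := hf.continuousOn_derivWithin (uniqueDiffOn_Icc hcd) le_rfl
    apply ContinuousOn.intervalIntegrable
    rwa [uIcc_of_le hcd.le]

lemma dW {c d x : ℝ} (hx : x ∈ Ioo c d) {f g : ℝ → ℝ} {s : ℝ}
    (hfg : ∀ y ∈ Icc c d, f y = g y) (hg : HasDerivAt g s x) :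
    derivWithin f (Icc c d) x = s := by
  rw [derivWithin_congr hfg (hfg x (Ioo_subset_Icc_self hx)),
      derivWithin_of_mem_nhds (Icc_mem_nhds hx.1 hx.2), hg.deriv]

lemma coreI {c d : ℝ} (hcd : c < d) {f F : ℝ → ℝ} (hf : ContDiffOn ℝ 1 f (Icc c d)) {r : ℝ}
    (hF : ∀ x ∈ Ioo c d, F x = r * derivWithin f (Icc c d) x) :
    ∫ x in c..d, F x = r * (f d - f c) := by
  rw [congrB hcd.le hF, intervalIntegral.integral_const_mul, ftcW hcd hf]

lemma coreSq {c d : ℝ} (hcd : c < d) {f F : ℝ → ℝ} {r : ℝ}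
    (hF : ∀ x ∈ Ioo c d, F x = r * (derivWithin f (Icc c d) x)^2) :
    ∫ x in c..d, F x = r * ∫ x in c..d, (derivWithin f (Icc c d) x)^2 := by
  rw [congrB hcd.le hF, intervalIntegral.integral_const_mul]

lemma csI {c d : ℝ} (hcd : c < d) {g : ℝ → ℝ} (hg : ContinuousOn g (Icc c d)) :
    (∫ x in c..d, g x)^2 ≤ (d - c) * ∫ x in c..d, (g x)^2 := by
  have hL : (0:ℝ) < d - c := sub_pos.mpr hcd
  set S := ∫ x in c..d, g x with hS
  set T := ∫ x in c..d, (g x)^2 with hT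
  have hint1 : IntervalIntegrable g volume c d := by
    apply ContinuousOn.intervalIntegrable; rwa [uIcc_of_le hcd.le]
  have hint2 : IntervalIntegrable (fun x => (g x)^2) volume c d := by
    apply ContinuousOn.intervalIntegrable; rw [uIcc_of_le hcd.le]; exact hg.pow 2
  set μ := S / (d - c) with hμ
  have h0 : (0:ℝ) ≤ ∫ x in c..d, (g x - μ)^2 :=
    intervalIntegral.integral_nonneg hcd.le (fun x _ => sq_nonneg _)
  have hexp : ∫ x in c..d, (g x - μ)^2 = T - 2*μ*S + μ^2*(d-c) := by
    have h1 : ∀ x, (g x - μ)^2 = (g x)^2 - (2*μ) * g x + μ^2 := fun x => by ring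
    simp_rw [h1]
    rw [intervalIntegral.integral_add ((hint2.sub (hint1.const_mul _)))
        intervalIntegrable_const,
      intervalIntegral.integral_sub hint2 (hint1.const_mul _),
      intervalIntegral.integral_const_mul, intervalIntegral.integral_const]
    simp [hS, hT]
    ring
  have hSμ : S = μ * (d - c) := by rw [hμ]; field_simp
  rw [hexp] at h0
  nlinarith [h0, hL, sq_nonneg μ]

lemma affD (m q x : ℝ) : HasDerivAt (fun y => m * y + q) m x := by
  simpa using ((hasDerivAt_id x).const_mul m).add_const q

lemma affdeg (m q : ℝ) :
    (Polynomial.C m * Polynomial.X + Polynomial.C q).degree ≤ 2 := by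
  refine le_trans (Polynomial.degree_linear_le) ?_
  norm_num

lemma affeval (m q x : ℝ) :
    (Polynomial.C m * Polynomial.X + Polynomial.C q).eval x = m * x + q := by simp

lemma affderiv (m q : ℝ) :
    (Polynomial.C m * Polynomial.X + Polynomial.C q).derivative = Polynomial.C m := by
  simp

set_option maxHeartbeats 1000000 in
/-- Interface-point error identity: for `e` satisfying Galerkin orthogonality
against `V_h`, the point error at `α` equals the pairing with the bubble function,
`e(α) = ∫ β b_h' e'`, and hence is bounded via Cauchy–Schwarz. -/
theorem stmt_12 (n k : ℕ) (t : ℕ → ℝ) (α βm βp : ℝ)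
    (hk : k < n) (hmono : ∀ j < n, t j < t (j + 1))
    (hα : α ∈ Ioo (t k) (t (k + 1)))
    (hβm : 0 < βm) (hβp : 0 < βp)
    (β : ℝ → ℝ) (hβ : β = fun x => if x < α then βm else βp)
    (A : ℝ) (hA : A = 1 / (βm * (t (k + 1) - α) + βp * (α - t k)))
    (b : ℝ → ℝ)
    (hb : b = fun x =>
      if x < t k then 0
      else if x ≤ α then A * (t (k + 1) - α) * (x - t k)
      else if x ≤ t (k + 1) then A * (α - t k) * (t (k + 1) - x)
      else 0)
    (e : ℝ → ℝ)
    (hec : ContinuousOn e (Icc (t 0) (t n)))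
    (hea : e (t 0) = 0) (heb : e (t n) = 0)
    (hereg : ∀ j < n, j ≠ k → ContDiffOn ℝ 1 e (Icc (t j) (t (j + 1))))
    (heregk1 : ContDiffOn ℝ 1 e (Icc (t k) α))
    (heregk2 : ContDiffOn ℝ 1 e (Icc α (t (k + 1))))
    (horth : ∀ v : ℝ → ℝ, IsVhQuad α βm βp n k t v →
      (∑ j ∈ Finset.range n,
        if j = k then
          (∫ x in t k..α,
            β x * derivWithin e (Icc (t k) α) x * derivWithin v (Icc (t k) α) x)
          + (∫ x in α..t (k + 1),
            β x * derivWithin e (Icc α (t (k + 1))) x * derivWithin v (Icc α (t (k + 1))) x)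
        else
          ∫ x in t j..t (j + 1),
            β x * derivWithin e (Icc (t j) (t (j + 1))) x
              * derivWithin v (Icc (t j) (t (j + 1))) x) = 0) :
    e α = (∫ x in t k..α,
            β x * derivWithin b (Icc (t k) α) x * derivWithin e (Icc (t k) α) x)
          + (∫ x in α..t (k + 1),
            β x * derivWithin b (Icc α (t (k + 1))) x * derivWithin e (Icc α (t (k + 1))) x)
    ∧ |e α| ≤ Real.sqrt (A * (α - t k) * (t (k + 1) - α)) *
        Real.sqrt (∑ j ∈ Finset.range n,
          if j = k then
            (∫ x in t k..α, β x * (derivWithin e (Icc (t k) α) x) ^ 2)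
            + (∫ x in α..t (k + 1), β x * (derivWithin e (Icc α (t (k + 1))) x) ^ 2)
          else
            ∫ x in t j..t (j + 1), β x * (derivWithin e (Icc (t j) (t (j + 1))) x) ^ 2) := by
  obtain ⟨hα1, hα2⟩ := hα
  have htle : ∀ j : ℕ, j ≤ n → ∀ i : ℕ, i ≤ j → t i ≤ t j := by
    intro j
    induction j with
    | zero => intro _ i hi; rw [Nat.le_zero.mp hi]
    | succ m ih =>
      intro hmn i hi
      rcases Nat.eq_or_lt_of_le hi with h | h
      · rw [h]
      · exact le_trans (ih (by omega) i (by omega)) (hmono m (by omega)).le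
  have ht0k : t 0 ≤ t k := htle k (by omega) 0 (by omega)
  have htk1n : t (k+1) ≤ t n := htle n le_rfl (k+1) (by omega)
  have hL1 : (0:ℝ) < α - t k := sub_pos.mpr hα1
  have hL2 : (0:ℝ) < t (k+1) - α := sub_pos.mpr hα2
  have hD : (0:ℝ) < βm * (t (k+1) - α) + βp * (α - t k) := by positivity
  have hApos : 0 < A := by rw [hA]; positivity
  have hAD : A * (βm * (t (k+1) - α) + βp * (α - t k)) = 1 := by
    rw [hA]; field_simp
  have hden : βm * (α - t n) - βp * (α - t 0) < 0 := by nlinarith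
  set c0 : ℝ := 1 / (βm * (α - t n) - βp * (α - t 0)) with hc0
  set s₁ : ℝ := (α - t n) * c0 with hs1
  set s₂ : ℝ := (α - t 0) * c0 with hs2
  have hs : βm * s₁ - βp * s₂ = 1 := by
    rw [hs1, hs2, hc0]; field_simp
    exact div_self hden.ne
  have hGα : s₁ * (α - t 0) = s₂ * (α - t n) := by rw [hs1, hs2]; ring
  set G : ℝ → ℝ := fun x => if x ≤ α then s₁ * (x - t 0) else s₂ * (x - t n) with hG
  set v : ℝ → ℝ := fun x => G x - b x with hv
  have hvx : ∀ x, v x = G x - b x := fun _ => rfl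
  have hGx : ∀ x, G x = if x ≤ α then s₁ * (x - t 0) else s₂ * (x - t n) := fun _ => rfl
  have hbx0 : ∀ x, b x = if x < t k then 0
      else if x ≤ α then A * (t (k + 1) - α) * (x - t k)
      else if x ≤ t (k + 1) then A * (α - t k) * (t (k + 1) - x)
      else 0 := fun x => by rw [hb]
  have hβx : ∀ x, β x = if x < α then βm else βp := fun x => by rw [hβ]
  have hβnn : ∀ x, 0 ≤ β x := by
    intro x; rw [hβx x]; split_ifs <;> positivity
  -- closed form of b as max/min
  have hbf : b = fun x => A * max 0 (min ((t (k+1) - α) * (x - t k)) ((α - t k) * (t (k+1) - x))) := by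
    funext x; rw [hbx0 x]
    rcases lt_or_ge x (t k) with h1 | h1
    · have hm : min ((t (k+1) - α) * (x - t k)) ((α - t k) * (t (k+1) - x)) ≤ 0 :=
        le_trans (min_le_left _ _) (mul_nonpos_iff.mpr (Or.inl ⟨by linarith, by linarith⟩))
      rw [if_pos h1, max_eq_left hm, mul_zero]
    · rw [if_neg (not_lt.mpr h1)]
      rcases le_or_gt x α with h2 | h2
      · have hle : (t (k+1) - α) * (x - t k) ≤ (α - t k) * (t (k+1) - x) := by
          nlinarith [mul_nonneg (show (0:ℝ) ≤ t (k+1) - t k by linarith)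
            (show (0:ℝ) ≤ α - x by linarith)]
        have hnn : (0:ℝ) ≤ (t (k+1) - α) * (x - t k) := mul_nonneg (by linarith) (by linarith)
        rw [if_pos h2, min_eq_left hle, max_eq_right hnn]; ring
      · rw [if_neg (not_le.mpr h2)]
        rcases le_or_gt x (t (k+1)) with h3 | h3
        · have hle : (α - t k) * (t (k+1) - x) ≤ (t (k+1) - α) * (x - t k) := by
            nlinarith [mul_nonneg (show (0:ℝ) ≤ t (k+1) - t k by linarith)
              (show (0:ℝ) ≤ x - α by linarith)]
          have hnn : (0:ℝ) ≤ (α - t k) * (t (k+1) - x) := mul_nonneg (by linarith) (by linarith)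
          rw [if_pos h3, min_eq_right hle, max_eq_right hnn]; ring
        · have hm : min ((t (k+1) - α) * (x - t k)) ((α - t k) * (t (k+1) - x)) ≤ 0 :=
            le_trans (min_le_right _ _) (mul_nonpos_iff.mpr (Or.inl ⟨by linarith, by linarith⟩))
          rw [if_neg (not_le.mpr h3), max_eq_left hm, mul_zero]
  have hbcont : Continuous b := by
    rw [hbf]; fun_prop
  have hGcont : Continuous G := by
    rw [hG]
    apply Continuous.if_le (by fun_prop) (by fun_prop) continuous_id continuous_const
    intro x hx
    have hxα : x = α := hx
    subst hxα; exact hGα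
  -- piecewise formulas for b and G on elements
  have hbOn1 : ∀ y ∈ Icc (t k) α, b y = A * (t (k+1) - α) * (y - t k) := by
    intro y hy
    rw [hbx0 y, if_neg (not_lt.mpr hy.1), if_pos hy.2]
  have hbOn2 : ∀ y ∈ Icc α (t (k+1)), b y = A * (α - t k) * (t (k+1) - y) := by
    intro y hy
    rw [hbx0 y, if_neg (not_lt.mpr (le_trans hα1.le hy.1))]
    rcases le_or_gt y α with h2 | h2
    · have hyα : y = α := le_antisymm h2 hy.1
      rw [if_pos h2, hyα]; ring
    · rw [if_neg (not_le.mpr h2), if_pos hy.2]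
  have hbOn0 : ∀ j, j + 1 ≤ k → ∀ y ∈ Icc (t j) (t (j+1)), b y = 0 := by
    intro j hjk y hy
    have hyk : y ≤ t k := le_trans hy.2 (htle k (by omega) (j+1) hjk)
    rw [hbx0 y]
    rcases lt_or_ge y (t k) with h1 | h1
    · rw [if_pos h1]
    · have hyek : y = t k := le_antisymm hyk h1
      rw [if_neg (not_lt.mpr h1), if_pos (by rw [hyek]; exact hα1.le), hyek]; ring
  have hbOn3 : ∀ j, k + 1 ≤ j → j < n → ∀ y ∈ Icc (t j) (t (j+1)), b y = 0 := by
    intro j hjk hjn y hy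
    have hyk1 : t (k+1) ≤ y := le_trans (htle j (by omega) (k+1) hjk) hy.1
    rw [hbx0 y, if_neg (not_lt.mpr (le_trans (le_trans hα1.le hα2.le) hyk1)),
      if_neg (not_le.mpr (lt_of_lt_of_le hα2 hyk1))]
    rcases le_or_gt y (t (k+1)) with h3 | h3
    · have hyek : y = t (k+1) := le_antisymm h3 hyk1
      rw [if_pos h3, hyek]; ring
    · rw [if_neg (not_le.mpr h3)]
  have hGOn2 : ∀ y ∈ Icc α (t (k+1)), G y = s₂ * (y - t n) := by
    intro y hy
    rw [hGx y]
    rcases le_or_gt y α with h2 | h2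
    · have hyα : y = α := le_antisymm h2 hy.1
      rw [if_pos h2, hyα, hGα]
    · rw [if_neg (not_le.mpr h2)]
  have hbfx : ∀ x, b x = A * max 0 (min ((t (k+1) - α) * (x - t k)) ((α - t k) * (t (k+1) - x))) :=
    fun x => by rw [hbf]
  have hvmem : IsVhQuad α βm βp n k t v := by
    refine ⟨(hGcont.sub hbcont).continuousOn, ?_, ?_, ?_, ?_⟩
    · show G (t 0) - b (t 0) = 0
      have hG0 : G (t 0) = 0 := by
        rw [hGx (t 0), if_pos (by linarith : t 0 ≤ α)]; ring
      have hb0 : b (t 0) = 0 := by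
        rw [hbfx (t 0), max_eq_left (le_trans (min_le_left _ _)
          (mul_nonpos_iff.mpr (Or.inl ⟨by linarith, by linarith⟩))), mul_zero]
      rw [hG0, hb0]; ring
    · show G (t n) - b (t n) = 0
      have hG0 : G (t n) = 0 := by
        rw [hGx (t n), if_neg (not_le.mpr (by linarith : α < t n))]; ring
      have hb0 : b (t n) = 0 := by
        rw [hbfx (t n), max_eq_left (le_trans (min_le_right _ _)
          (mul_nonpos_iff.mpr (Or.inl ⟨by linarith, by linarith⟩))), mul_zero]
      rw [hG0, hb0]; ring
    · intro j hjn hjk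
      rcases Nat.lt_or_ge j k with hlt | hge
      · refine ⟨Polynomial.C s₁ * Polynomial.X + Polynomial.C (-(s₁ * t 0)), affdeg _ _, ?_⟩
        intro x hx
        have hxk : x ≤ t k := le_trans hx.2 (htle k (by omega) (j+1) hlt)
        rw [affeval, hvx x, hGx x, if_pos (by linarith : x ≤ α), hbOn0 j hlt x hx]
        ring
      · have hge1 : k + 1 ≤ j := by omega
        refine ⟨Polynomial.C s₂ * Polynomial.X + Polynomial.C (-(s₂ * t n)), affdeg _ _, ?_⟩
        intro x hx
        have hxk : t (k+1) ≤ x := le_trans (htle j (by omega) (k+1) hge1) hx.1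
        rw [affeval, hvx x, hGx x, if_neg (not_le.mpr (by linarith : α < x)),
          hbOn3 j hge1 hjn x hx]
        ring
    · refine ⟨Polynomial.C (s₁ - A * (t (k+1) - α)) * Polynomial.X +
        Polynomial.C (A * (t (k+1) - α) * t k - s₁ * t 0),
        Polynomial.C (s₂ + A * (α - t k)) * Polynomial.X +
        Polynomial.C (-(s₂ * t n) - A * (α - t k) * t (k+1)),
        affdeg _ _, affdeg _ _, ?_, ?_, ?_, ?_⟩
      · intro x hx
        rw [affeval, hvx x, hGx x, if_pos hx.2, hbOn1 x hx]; ring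
      · intro x hx
        rw [affeval, hvx x, hGOn2 x hx, hbOn2 x hx]; ring
      · rw [affderiv, affderiv]; simp only [Polynomial.eval_C]
        linear_combination hs - hAD
      · rw [affderiv, affderiv]; simp
  have hβ1 : ∀ x ∈ Ioo (t k) α, β x = βm := fun x hx => by
    rw [hβx x, if_pos hx.2]
  have hβ2 : ∀ x ∈ Ioo α (t (k+1)), β x = βp := fun x hx => by
    rw [hβx x, if_neg (not_lt.mpr hx.1.le)]
  have hdb1 : ∀ x ∈ Ioo (t k) α, derivWithin b (Icc (t k) α) x = A * (t (k+1) - α) := by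
    intro x hx
    refine dW hx (fun y hy => ?_) (affD (A * (t (k+1) - α)) (-(A * (t (k+1) - α) * t k)) x)
    rw [hbOn1 y hy]; ring
  have hdb2 : ∀ x ∈ Ioo α (t (k+1)), derivWithin b (Icc α (t (k+1))) x = -(A * (α - t k)) := by
    intro x hx
    refine dW hx (fun y hy => ?_) (affD (-(A * (α - t k))) (A * (α - t k) * t (k+1)) x)
    rw [hbOn2 y hy]; ring
  have hdv1 : ∀ x ∈ Ioo (t k) α, derivWithin v (Icc (t k) α) x = s₁ - A * (t (k+1) - α) := by
    intro x hx
    refine dW hx (fun y hy => ?_)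
      (affD (s₁ - A * (t (k+1) - α)) (A * (t (k+1) - α) * t k - s₁ * t 0) x)
    rw [hvx y, hGx y, if_pos hy.2, hbOn1 y hy]; ring
  have hdv2 : ∀ x ∈ Ioo α (t (k+1)), derivWithin v (Icc α (t (k+1))) x = s₂ + A * (α - t k) := by
    intro x hx
    refine dW hx (fun y hy => ?_)
      (affD (s₂ + A * (α - t k)) (-(s₂ * t n) - A * (α - t k) * t (k+1)) x)
    rw [hvx y, hGOn2 y hy, hbOn2 y hy]; ring
  set Br : ℝ := βm * (A * (t (k+1) - α)) * e (t k) + βp * (A * (α - t k)) * e (t (k+1)) with hBrd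
  set F : ℕ → ℝ := fun j => (if j ≤ k then βm * s₁ else βp * s₂) * e (t j) with hFd
  have Hv := horth v hvmem
  have hsum : ∀ j ∈ Finset.range n,
      (if j = k then
          (∫ x in t k..α,
            β x * derivWithin e (Icc (t k) α) x * derivWithin v (Icc (t k) α) x)
          + (∫ x in α..t (k + 1),
            β x * derivWithin e (Icc α (t (k + 1))) x * derivWithin v (Icc α (t (k + 1))) x)
        else
          ∫ x in t j..t (j + 1),
            β x * derivWithin e (Icc (t j) (t (j + 1))) x
              * derivWithin v (Icc (t j) (t (j + 1))) x)
      = (F (j+1) - F j) + (if j = k then Br else 0) := by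
    intro j hj
    rw [Finset.mem_range] at hj
    by_cases hjk : j = k
    · rw [if_pos hjk, if_pos hjk, hjk]
      have hIa : (∫ x in t k..α,
            β x * derivWithin e (Icc (t k) α) x * derivWithin v (Icc (t k) α) x)
          = (βm * (s₁ - A * (t (k+1) - α))) * (e α - e (t k)) :=
        coreI hα1 heregk1 (fun x hx => by rw [hβ1 x hx, hdv1 x hx]; ring)
      have hIb : (∫ x in α..t (k+1),
            β x * derivWithin e (Icc α (t (k+1))) x * derivWithin v (Icc α (t (k+1))) x)
          = (βp * (s₂ + A * (α - t k))) * (e (t (k+1)) - e α) :=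
        coreI hα2 heregk2 (fun x hx => by rw [hβ2 x hx, hdv2 x hx]; ring)
      rw [hIa, hIb]
      simp only [hFd, hBrd]
      rw [if_neg (by omega : ¬ k + 1 ≤ k), if_pos (le_refl k)]
      linear_combination (e α) * hs - (e α) * hAD
    · rw [if_neg hjk, if_neg hjk]
      rcases Nat.lt_or_ge j k with hlt | hge
      · have hIc : (∫ x in t j..t (j+1),
              β x * derivWithin e (Icc (t j) (t (j+1))) x
                * derivWithin v (Icc (t j) (t (j+1))) x)
            = (βm * s₁) * (e (t (j+1)) - e (t j)) := by
          apply coreI (hmono j hj) (hereg j hj hjk)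
          intro x hx
          have hxk : x < t k := lt_of_lt_of_le hx.2 (htle k (by omega) (j+1) hlt)
          have hdvj : derivWithin v (Icc (t j) (t (j+1))) x = s₁ := by
            refine dW hx (fun y hy => ?_) (affD s₁ (-(s₁ * t 0)) x)
            have hyk : y ≤ t k := le_trans hy.2 (htle k (by omega) (j+1) hlt)
            rw [hvx y, hGx y, if_pos (by linarith : y ≤ α), hbOn0 j hlt y hy]; ring
          rw [hβx x, if_pos (by linarith : x < α), hdvj]; ring
        rw [hIc]
        simp only [hFd]
        rw [if_pos (by omega : j ≤ k), if_pos (by omega : j + 1 ≤ k)]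
        ring
      · have hge1 : k + 1 ≤ j := by omega
        have hIc : (∫ x in t j..t (j+1),
              β x * derivWithin e (Icc (t j) (t (j+1))) x
                * derivWithin v (Icc (t j) (t (j+1))) x)
            = (βp * s₂) * (e (t (j+1)) - e (t j)) := by
          apply coreI (hmono j hj) (hereg j hj hjk)
          intro x hx
          have hxk : t (k+1) < x := lt_of_le_of_lt (htle j (by omega) (k+1) hge1) hx.1
          have hdvj : derivWithin v (Icc (t j) (t (j+1))) x = s₂ := by
            refine dW hx (fun y hy => ?_) (affD s₂ (-(s₂ * t n)) x)
            have hyk : t (k+1) ≤ y := le_trans (htle j (by omega) (k+1) hge1) hy.1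
            rw [hvx y, hGx y, if_neg (not_le.mpr (by linarith : α < y)),
              hbOn3 j hge1 hj y hy]; ring
          rw [hβx x, if_neg (not_lt.mpr (by linarith : α ≤ x)), hdvj]; ring
        rw [hIc]
        simp only [hFd]
        rw [if_neg (by omega : ¬ j ≤ k), if_neg (by omega : ¬ j + 1 ≤ k)]
        ring
  rw [Finset.sum_congr rfl hsum, Finset.sum_add_distrib, Finset.sum_range_sub,
    Finset.sum_ite_eq' (Finset.range n) k (fun _ => Br),
    if_pos (Finset.mem_range.mpr hk)] at Hv
  have hBr : βm * (A * (t (k+1) - α)) * e (t k) + βp * (A * (α - t k)) * e (t (k+1)) = 0 := by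
    simp only [hFd, hBrd] at Hv
    rw [if_neg (by omega : ¬ n ≤ k), if_pos (Nat.zero_le k), hea, heb] at Hv
    linear_combination Hv
  have hI1 : (∫ x in t k..α,
        β x * derivWithin b (Icc (t k) α) x * derivWithin e (Icc (t k) α) x)
      = (βm * (A * (t (k+1) - α))) * (e α - e (t k)) :=
    coreI hα1 heregk1 (fun x hx => by rw [hβ1 x hx, hdb1 x hx])
  have hI2 : (∫ x in α..t (k+1),
        β x * derivWithin b (Icc α (t (k+1))) x * derivWithin e (Icc α (t (k+1))) x)
      = (-(βp * (A * (α - t k)))) * (e (t (k+1)) - e α) :=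
    coreI hα2 heregk2 (fun x hx => by rw [hβ2 x hx, hdb2 x hx]; ring)
  have heα : e α = (βm * (A * (t (k+1) - α))) * (e α - e (t k))
      + (-(βp * (A * (α - t k)))) * (e (t (k+1)) - e α) := by
    linear_combination hBr - (e α) * hAD
  constructor
  · rw [hI1, hI2]; exact heα
  · set S₁ := ∫ x in t k..α, (derivWithin e (Icc (t k) α) x)^2 with hS₁d
    set S₂ := ∫ x in α..t (k+1), (derivWithin e (Icc α (t (k+1))) x)^2 with hS₂d
    set X := e α - e (t k) with hXd
    set Y := e (t (k+1)) - e α with hYd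
    have hXint : ∫ x in t k..α, derivWithin e (Icc (t k) α) x = X := ftcW hα1 heregk1
    have hYint : ∫ x in α..t (k+1), derivWithin e (Icc α (t (k+1))) x = Y := ftcW hα2 heregk2
    have hX2 : X^2 ≤ (α - t k) * S₁ := by
      rw [← hXint]
      exact csI hα1 (heregk1.continuousOn_derivWithin (uniqueDiffOn_Icc hα1) le_rfl)
    have hY2 : Y^2 ≤ (t (k+1) - α) * S₂ := by
      rw [← hYint]
      exact csI hα2 (heregk2.continuousOn_derivWithin (uniqueDiffOn_Icc hα2) le_rfl)
    have hS₁nn : 0 ≤ S₁ := intervalIntegral.integral_nonneg hα1.le (fun x _ => sq_nonneg _)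
    have hS₂nn : 0 ≤ S₂ := intervalIntegral.integral_nonneg hα2.le (fun x _ => sq_nonneg _)
    have hJ1 : (∫ x in t k..α, β x * (derivWithin e (Icc (t k) α) x)^2) = βm * S₁ :=
      coreSq hα1 (fun x hx => by rw [hβ1 x hx])
    have hJ2 : (∫ x in α..t (k+1), β x * (derivWithin e (Icc α (t (k+1))) x)^2) = βp * S₂ :=
      coreSq hα2 (fun x hx => by rw [hβ2 x hx])
    have heα' : e α = A * (βm * (t (k+1) - α) * X - βp * (α - t k) * Y) := by
      rw [hXd, hYd]; linear_combination heα
    have hcs : (βm * (t (k+1) - α) * X - βp * (α - t k) * Y)^2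
        ≤ (βm * (t (k+1) - α) + βp * (α - t k))
          * (βm * (t (k+1) - α) * X^2 + βp * (α - t k) * Y^2) := by
      nlinarith [mul_nonneg (mul_nonneg (mul_nonneg hβm.le hβp.le)
        (by linarith : (0:ℝ) ≤ t (k+1) - α))
        (mul_nonneg (by linarith : (0:ℝ) ≤ α - t k) (sq_nonneg (X + Y)))]
    have hkey : (e α)^2 ≤ A * (α - t k) * (t (k+1) - α) * (βm * S₁ + βp * S₂) := by
      calc (e α)^2 = A^2 * (βm * (t (k+1) - α) * X - βp * (α - t k) * Y)^2 := by
            rw [heα']; ring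
        _ ≤ A^2 * ((βm * (t (k+1) - α) + βp * (α - t k))
              * (βm * (t (k+1) - α) * X^2 + βp * (α - t k) * Y^2)) :=
            mul_le_mul_of_nonneg_left hcs (sq_nonneg A)
        _ = A * (βm * (t (k+1) - α) * X^2 + βp * (α - t k) * Y^2) := by
            linear_combination (A * (βm * (t (k+1) - α) * X^2 + βp * (α - t k) * Y^2)) * hAD
        _ ≤ A * (βm * (t (k+1) - α) * ((α - t k) * S₁)
              + βp * (α - t k) * ((t (k+1) - α) * S₂)) := by
            have h2 : βm * (t (k+1) - α) * X^2 ≤ βm * (t (k+1) - α) * ((α - t k) * S₁) :=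
              mul_le_mul_of_nonneg_left hX2 (by positivity)
            have h3 : βp * (α - t k) * Y^2 ≤ βp * (α - t k) * ((t (k+1) - α) * S₂) :=
              mul_le_mul_of_nonneg_left hY2 (by positivity)
            exact mul_le_mul_of_nonneg_left (add_le_add h2 h3) hApos.le
        _ = A * (α - t k) * (t (k+1) - α) * (βm * S₁ + βp * S₂) := by ring
    set SS := ∑ j ∈ Finset.range n,
        if j = k then
          (∫ x in t k..α, β x * (derivWithin e (Icc (t k) α) x) ^ 2)
          + (∫ x in α..t (k + 1), β x * (derivWithin e (Icc α (t (k + 1))) x) ^ 2)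
        else
          ∫ x in t j..t (j + 1), β x * (derivWithin e (Icc (t j) (t (j + 1))) x) ^ 2
      with hSSd
    have hSig : βm * S₁ + βp * S₂ ≤ SS := by
      rw [hSSd, ← Finset.sum_erase_add _ _ (Finset.mem_range.mpr hk), if_pos rfl, hJ1, hJ2]
      have hnn : (0:ℝ) ≤ ∑ j ∈ (Finset.range n).erase k,
          (if j = k then βm * S₁ + βp * S₂
          else
            ∫ x in t j..t (j + 1), β x * (derivWithin e (Icc (t j) (t (j + 1))) x) ^ 2) := by
        apply Finset.sum_nonneg
        intro j hj
        rw [Finset.mem_erase] at hj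
        rw [if_neg hj.1]
        exact intervalIntegral.integral_nonneg (hmono j (Finset.mem_range.mp hj.2)).le
          (fun x _ => mul_nonneg (hβnn x) (sq_nonneg _))
      linarith
    have hAL : 0 ≤ A * (α - t k) * (t (k+1) - α) := by positivity
    have hq : (e α)^2 ≤ (A * (α - t k) * (t (k+1) - α)) * SS :=
      le_trans hkey (mul_le_mul_of_nonneg_left hSig hAL)
    calc |e α| = Real.sqrt ((e α)^2) := (Real.sqrt_sq_eq_abs _).symm
      _ ≤ Real.sqrt ((A * (α - t k) * (t (k+1) - α)) * SS) := Real.sqrt_le_sqrt hq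
      _ = Real.sqrt (A * (α - t k) * (t (k+1) - α)) * Real.sqrt SS := Real.sqrt_mul hAL _
end

section
/- Let a < t₁, h = t₁ - a, t_{1/2} = (a+t₁)/2, and β⁻ > 0. Let φ₀ and φ_{1/2} be the standard quadratic Lagrange basis functions on [a,t₁] at the nodes a and t_{1/2}, so φ₀'(x) = (2/h²)(2x - t_{1/2} - t₁) and φ_{1/2}'(x) = -(4/h²)(2x - a - t₁). Let e be continuously differentiable on [a,t₁] with e(a) = e(t₁) = 0 and ∫_a^{t₁} β⁻ e' φ_{1/2}' dx = 0. Then ∫_a^{t₁} β⁻ e' φ₀' dx = 0. -/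
open Set intervalIntegral

/-- Endpoint flux exactness (case q = 0): if `e` is `C¹` on `[a,t₁]` with
`e a = e t₁ = 0` and is orthogonal to the midpoint quadratic basis derivative
`φ_{1/2}' = -(4/h²)(2x - a - t₁)`, then `∫ β⁻ e' φ₀' = 0`, where
`φ₀' = (2/h²)(2x - t_{1/2} - t₁)`. -/
theorem stmt_16 (a t1 βm : ℝ) (h : a < t1) (hβ : 0 < βm)
    (e e' : ℝ → ℝ)
    (he : ∀ x ∈ Icc a t1, HasDerivWithinAt e (e' x) (Icc a t1) x)
    (he'c : ContinuousOn e' (Icc a t1))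
    (hea : e a = 0) (het : e t1 = 0)
    (horth : (∫ x in a..t1,
        βm * e' x * (-(4 / (t1 - a) ^ 2) * (2 * x - a - t1))) = 0) :
    (∫ x in a..t1,
        βm * e' x * ((2 / (t1 - a) ^ 2) * (2 * x - (a + t1) / 2 - t1))) = 0 := by
  have hne : t1 - a ≠ 0 := sub_ne_zero.mpr h.ne'
  have huIcc : uIcc a t1 = Icc a t1 := uIcc_of_le h.le
  have hcont : ContinuousOn e (Icc a t1) := fun x hx => (he x hx).continuousWithinAt
  have hint : IntervalIntegrable e' MeasureTheory.volume a t1 :=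
    ContinuousOn.intervalIntegrable (by rwa [huIcc])
  have hFTC : (∫ x in a..t1, e' x) = 0 := by
    rw [integral_eq_sub_of_hasDeriv_right_of_le h.le hcont
      (fun x hx => ((he x (Ioo_subset_Icc_self hx)).hasDerivAt
        (Icc_mem_nhds hx.1 hx.2)).hasDerivWithinAt) hint, het, hea, sub_zero]
  have hint1 : IntervalIntegrable
      (fun x => βm * e' x * (-(4 / (t1 - a) ^ 2) * (2 * x - a - t1)))
      MeasureTheory.volume a t1 := by
    apply ContinuousOn.intervalIntegrable
    rw [huIcc]
    exact (continuousOn_const.mul he'c).mul (Continuous.continuousOn (by continuity))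
  have hint2 : IntervalIntegrable (fun x => (-(βm / (t1 - a))) * e' x)
      MeasureTheory.volume a t1 := hint.const_mul _
  calc (∫ x in a..t1, βm * e' x * ((2 / (t1 - a) ^ 2) * (2 * x - (a + t1) / 2 - t1)))
      = ∫ x in a..t1, ((-(1/2)) * (βm * e' x * (-(4 / (t1 - a) ^ 2) * (2 * x - a - t1)))
          + (-(βm / (t1 - a))) * e' x) := by
        apply integral_congr
        intro x _
        field_simp
        ring
    _ = (-(1/2)) * (∫ x in a..t1, βm * e' x * (-(4 / (t1 - a) ^ 2) * (2 * x - a - t1)))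
          + (-(βm / (t1 - a))) * (∫ x in a..t1, e' x) := by
        rw [integral_add (hint1.const_mul _) hint2, integral_const_mul, integral_const_mul]
    _ = 0 := by rw [horth, hFTC]; ring
end

section
/- Let a < t₁, h = t₁ - a, t_{1/2} = (a+t₁)/2, and β⁻ > 0, and let q be continuous on [a,t₁]. Let φ₀ and φ_{1/2} be the standard quadratic Lagrange basis functions on [a,t₁] at the nodes a and t_{1/2}, so φ₀'(x) = (2/h²)(2x - t_{1/2} - t₁), φ_{1/2}(x) = -(4/h²)(x-a)(x-t₁), and φ_{1/2}'(x) = -(4/h²)(2x - a - t₁). Let e be continuously differentiable on [a,t₁] with e(a) = 0 and ∫_a^{t₁} (β⁻ e' φ_{1/2}' + q e φ_{1/2}) dx = 0. Then ∫_a^{t₁} β⁻ e' φ₀' dx = (2β⁻/h²)(a - t_{1/2}) e(t₁) + (1/2) ∫_a^{t₁} q e φ_{1/2} dx. -/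
open Set intervalIntegral

/-- Refined endpoint flux identity (case q ≥ 0): if `e` is `C¹` on `[a,t₁]` with
`e a = 0` and satisfies the Galerkin relation tested with the midpoint basis
function `φ_{1/2} = -(4/h²)(x-a)(x-t₁)`, then
`∫ β⁻ e' φ₀' = (2β⁻/h²)(a - t_{1/2}) e(t₁) + (1/2) ∫ q e φ_{1/2}`. -/
theorem stmt_17 (a t1 βm : ℝ) (h : a < t1) (hβ : 0 < βm)
    (q e e' : ℝ → ℝ) (hq : ContinuousOn q (Icc a t1))
    (he : ∀ x ∈ Icc a t1, HasDerivWithinAt e (e' x) (Icc a t1) x)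
    (he'c : ContinuousOn e' (Icc a t1))
    (hea : e a = 0)
    (horth : (∫ x in a..t1,
        (βm * e' x * (-(4 / (t1 - a) ^ 2) * (2 * x - a - t1))
          + q x * e x * (-(4 / (t1 - a) ^ 2) * ((x - a) * (x - t1))))) = 0) :
    (∫ x in a..t1,
        βm * e' x * ((2 / (t1 - a) ^ 2) * (2 * x - (a + t1) / 2 - t1)))
      = (2 * βm / (t1 - a) ^ 2) * (a - (a + t1) / 2) * e t1
        + (1 / 2) * ∫ x in a..t1,
            q x * e x * (-(4 / (t1 - a) ^ 2) * ((x - a) * (x - t1))) := by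
  have hne : (t1 - a) ^ 2 ≠ 0 := pow_ne_zero _ (sub_ne_zero.2 h.ne')
  have huIcc : uIcc a t1 = Icc a t1 := uIcc_of_le h.le
  have hecont : ContinuousOn e (Icc a t1) :=
    fun x hx => (he x hx).continuousWithinAt
  -- Integrability of the pieces
  have hA : IntervalIntegrable
      (fun x => βm * e' x * (-(4 / (t1 - a) ^ 2) * (2 * x - a - t1)))
      MeasureTheory.volume a t1 := by
    apply ContinuousOn.intervalIntegrable
    rw [huIcc]
    exact ((continuousOn_const.mul he'c).mul (by fun_prop))
  have hB : IntervalIntegrable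
      (fun x => q x * e x * (-(4 / (t1 - a) ^ 2) * ((x - a) * (x - t1))))
      MeasureTheory.volume a t1 := by
    apply ContinuousOn.intervalIntegrable
    rw [huIcc]
    exact ((hq.mul hecont).mul (by fun_prop))
  have hC : IntervalIntegrable e' MeasureTheory.volume a t1 := by
    apply ContinuousOn.intervalIntegrable
    rwa [huIcc]
  -- FTC
  have hft : (∫ x in a..t1, e' x) = e t1 := by
    have := intervalIntegral.integral_eq_sub_of_hasDeriv_right_of_le h.le
      hecont (fun x hx => ((he x (Ioo_subset_Icc_self hx)).hasDerivAt
        (Icc_mem_nhds hx.1 hx.2)).hasDerivWithinAt) hC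
    rw [this, hea, sub_zero]
  -- Orthogonality splits
  have hsplit : (∫ x in a..t1,
      βm * e' x * (-(4 / (t1 - a) ^ 2) * (2 * x - a - t1)))
      = -∫ x in a..t1, q x * e x * (-(4 / (t1 - a) ^ 2) * ((x - a) * (x - t1))) := by
    have := intervalIntegral.integral_add hA hB
    rw [horth] at this
    linarith
  -- pointwise identity
  have key : ∀ x : ℝ,
      βm * e' x * ((2 / (t1 - a) ^ 2) * (2 * x - (a + t1) / 2 - t1))
      = (-(1/2)) * (βm * e' x * (-(4 / (t1 - a) ^ 2) * (2 * x - a - t1)))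
        + (2 * βm / (t1 - a) ^ 2 * (a - (a + t1) / 2)) * e' x := by
    intro x
    field_simp
    ring
  calc (∫ x in a..t1,
        βm * e' x * ((2 / (t1 - a) ^ 2) * (2 * x - (a + t1) / 2 - t1)))
      = ∫ x in a..t1,
          ((-(1/2)) * (βm * e' x * (-(4 / (t1 - a) ^ 2) * (2 * x - a - t1)))
            + (2 * βm / (t1 - a) ^ 2 * (a - (a + t1) / 2)) * e' x) := by
        exact intervalIntegral.integral_congr (fun x _ => key x)
    _ = (-(1/2)) * (∫ x in a..t1,
          βm * e' x * (-(4 / (t1 - a) ^ 2) * (2 * x - a - t1)))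
        + (2 * βm / (t1 - a) ^ 2 * (a - (a + t1) / 2)) * ∫ x in a..t1, e' x := by
        rw [intervalIntegral.integral_add (hA.const_mul _) (hC.const_mul _),
          intervalIntegral.integral_const_mul, intervalIntegral.integral_const_mul]
    _ = _ := by
        rw [hsplit, hft]; ring
end
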